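/- arXiv:1909.13288 — 4 statements merged into one kernel-verified Lean document; each statement's English description precedes it below -/
import Mathlib

section
/- For α = 7.5, the function η ↦ B(η, α) has exactly two zeros: one zero η₁* < 0 and the zero η = 0. -/
open Real MeasureTheory Set Filter

/-- `A k η = ∫_0^1 z^k e^{-η z²} dz`. -/
noncomputable def A (k : ℕ) (η : ℝ) : ℝ :=
  ∫ z in (0:ℝ)..1, z ^ k * Real.exp (-η * z ^ 2)

/-- `B(η, α) = 3 e^{-η} / A₀(η) − (3 − 2η + 4η²/α)`. -/
noncomputable def B (η α : ℝ) : ℝ :=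
  3 * Real.exp (-η) / A 0 η - (3 - 2 * η + 4 * η ^ 2 / α)


noncomputable def Jg (g : ℝ → ℝ) (η : ℝ) : ℝ :=
  ∫ z in (0:ℝ)..1, g z * Real.exp (-η * z ^ 2)

noncomputable def pp (z : ℝ) : ℝ := z ^ 4 - z ^ 2 + 2/15

lemma pp_cont : Continuous pp := by unfold pp; continuity

lemma cont_integrand (g : ℝ → ℝ) (hg : Continuous g) (η : ℝ) :
    Continuous (fun z : ℝ => g z * Real.exp (-η * z ^ 2)) := by
  exact hg.mul ((Real.continuous_exp).comp (by continuity))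

lemma Jg_intable (g : ℝ → ℝ) (hg : Continuous g) (η a b : ℝ) :
    IntervalIntegrable (fun z : ℝ => g z * Real.exp (-η * z ^ 2)) volume a b :=
  (cont_integrand g hg η).intervalIntegrable a b

lemma Jg_eq_setInt (g : ℝ → ℝ) (η : ℝ) :
    Jg g η = ∫ z in Ioc (0:ℝ) 1, g z * Real.exp (-η * z ^ 2) :=
  intervalIntegral.integral_of_le zero_le_one

lemma hasDerivAt_Jg (g : ℝ → ℝ) (hg : Continuous g) (η₀ : ℝ) :
    HasDerivAt (Jg g) (Jg (fun z => -z ^ 2 * g z) η₀) η₀ := by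
  obtain ⟨C, hC⟩ := (isCompact_Icc (a := (0:ℝ)) (b := 1)).exists_bound_of_continuousOn
    hg.continuousOn
  have key := hasDerivAt_integral_of_dominated_loc_of_deriv_le
      (μ := volume.restrict (Ioc (0:ℝ) 1)) (x₀ := η₀) (s := Metric.ball η₀ 1) (Metric.ball_mem_nhds η₀ one_pos)
      (F := fun x z => g z * Real.exp (-x * z ^ 2))
      (F' := fun x z => -z ^ 2 * g z * Real.exp (-x * z ^ 2))
      (bound := fun _ => C * Real.exp (|η₀| + 1))
      (Filter.Eventually.of_forall fun x =>
        (cont_integrand g hg x).aestronglyMeasurable.restrict)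
      ((cont_integrand g hg η₀).integrableOn_Ioc)
      ((cont_integrand (fun z => -z ^ 2 * g z) (by continuity) η₀)).aestronglyMeasurable.restrict
      ?_ ?_ ?_
  · have h1 : (fun x => ∫ z, g z * Real.exp (-x * z ^ 2)
        ∂(volume.restrict (Ioc (0:ℝ) 1))) = Jg g := by
      funext x; rw [Jg_eq_setInt]
    have h2 : (∫ z, -z ^ 2 * g z * Real.exp (-η₀ * z ^ 2) ∂(volume.restrict (Ioc (0:ℝ) 1)))
        = Jg (fun z => -z ^ 2 * g z) η₀ := by rw [Jg_eq_setInt]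
    rw [h1, h2] at key
    exact key.2
  · rw [ae_restrict_iff' measurableSet_Ioc]
    refine Filter.Eventually.of_forall fun z hz => fun x hx => ?_
    have hz1 : z ∈ Icc (0:ℝ) 1 := ⟨hz.1.le, hz.2⟩
    have hz2 : 0 ≤ z ^ 2 := sq_nonneg z
    have hz3 : z ^ 2 ≤ 1 := by nlinarith [hz1.1, hz1.2]
    have hxb : |x| ≤ |η₀| + 1 := by
      have h := (Metric.mem_ball.mp hx).le
      rw [Real.dist_eq] at h
      calc |x| ≤ |x - η₀| + |η₀| := by simpa using abs_add_le (x - η₀) η₀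
        _ ≤ |η₀| + 1 := by linarith
    have hexp : Real.exp (-x * z ^ 2) ≤ Real.exp (|η₀| + 1) := by
      apply Real.exp_le_exp.mpr
      have : -x * z ^ 2 ≤ |x| * z ^ 2 := by nlinarith [neg_abs_le x, abs_nonneg x]
      nlinarith [abs_nonneg x]
    have hgz : |g z| ≤ C := hC z hz1
    have hCnn : 0 ≤ C := le_trans (abs_nonneg _) hgz
    have : ‖-z ^ 2 * g z * Real.exp (-x * z ^ 2)‖
        = z ^ 2 * |g z| * Real.exp (-x * z ^ 2) := by
      rw [norm_mul, norm_mul]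
      simp [abs_of_nonneg hz2, abs_of_nonneg (Real.exp_pos _).le]
    rw [this]
    calc z ^ 2 * |g z| * Real.exp (-x * z ^ 2)
        ≤ 1 * C * Real.exp (|η₀| + 1) := by
          apply mul_le_mul (by nlinarith [abs_nonneg (g z)]) hexp (Real.exp_pos _).le
          nlinarith
      _ = C * Real.exp (|η₀| + 1) := by ring
  · exact integrableOn_const measure_Ioc_lt_top.ne
  · refine Filter.Eventually.of_forall fun z => fun x _ => ?_
    have h1 : HasDerivAt (fun x : ℝ => -x * z ^ 2) (-z ^ 2) x := by
      simpa using ((hasDerivAt_id x).neg.mul_const (z ^ 2))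
    have h2 := (h1.exp).const_mul (g z)
    refine h2.congr_deriv ?_
    ring

lemma Jg_congr (g h : ℝ → ℝ) (hgh : ∀ z, g z = h z) (η : ℝ) : Jg g η = Jg h η := by
  unfold Jg; congr 1; funext z; rw [hgh]

lemma Jg_add (g h : ℝ → ℝ) (hg : Continuous g) (hh : Continuous h) (η : ℝ) :
    Jg (fun z => g z + h z) η = Jg g η + Jg h η := by
  unfold Jg
  rw [← intervalIntegral.integral_add (Jg_intable g hg η 0 1) (Jg_intable h hh η 0 1)]
  congr 1; funext z; ring

lemma Jg_const_mul (a : ℝ) (g : ℝ → ℝ) (η : ℝ) :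
    Jg (fun z => a * g z) η = a * Jg g η := by
  unfold Jg
  rw [← intervalIntegral.integral_const_mul]
  congr 1; funext z; ring

-- Φ = exp(r2 η) ψ(η), derivative = exp(r2 η) * Jg qq η

lemma I1 (η : ℝ) :
    Real.exp (-η) = Jg (fun _ => (1:ℝ)) η - 2 * η * Jg (fun z => z ^ 2) η := by
  have key : ∫ z in (0:ℝ)..1, ((1 - 2*η*z^2) * Real.exp (-η * z ^ 2))
      = Real.exp (-η) := by
    have h : ∀ z ∈ uIcc (0:ℝ) 1,
        HasDerivAt (fun z : ℝ => z * Real.exp (-η * z ^ 2))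
          ((1 - 2*η*z^2) * Real.exp (-η * z ^ 2)) z := by
      intro z _
      have h1 : HasDerivAt (fun z : ℝ => -η * z ^ 2) (-η * (2 * z)) z := by
        simpa using (hasDerivAt_pow 2 z).const_mul (-η)
      have := (hasDerivAt_id z).mul h1.exp
      refine this.congr_deriv ?_
      simp; ring
    have hint : IntervalIntegrable (fun z : ℝ => (1 - 2*η*z^2) * Real.exp (-η * z ^ 2))
        volume 0 1 := Jg_intable _ (by continuity) η 0 1
    have := intervalIntegral.integral_eq_sub_of_hasDerivAt h hint
    simpa using this
  have expand : Jg (fun _ => (1:ℝ)) η - 2 * η * Jg (fun z => z ^ 2) η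
      = ∫ z in (0:ℝ)..1, ((1 - 2*η*z^2) * Real.exp (-η * z ^ 2)) := by
    unfold Jg
    rw [← intervalIntegral.integral_const_mul,
      ← intervalIntegral.integral_sub (Jg_intable _ continuous_const η 0 1)
        (by simpa [mul_assoc] using (Jg_intable (fun z => z^2) (by continuity) η 0 1).const_mul (2*η))]
    congr 1; funext z; ring
  rw [expand, key]

-- identity I2 : 3 Jg z² - Jg 1 = 2η (Jg z⁴ - Jg z²)

lemma I2 (η : ℝ) :
    3 * Jg (fun z => z ^ 2) η - Jg (fun _ => (1:ℝ)) η
      = 2 * η * (Jg (fun z => z ^ 4) η - Jg (fun z => z ^ 2) η) := by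
  have key : ∫ z in (0:ℝ)..1,
      ((3*z^2 - 1 - 2*η*(z^4 - z^2)) * Real.exp (-η * z ^ 2)) = 0 := by
    have h : ∀ z ∈ uIcc (0:ℝ) 1,
        HasDerivAt (fun z : ℝ => (z^3 - z) * Real.exp (-η * z ^ 2))
          ((3*z^2 - 1 - 2*η*(z^4 - z^2)) * Real.exp (-η * z ^ 2)) z := by
      intro z _
      have h1 : HasDerivAt (fun z : ℝ => -η * z ^ 2) (-η * (2 * z)) z := by
        simpa using (hasDerivAt_pow 2 z).const_mul (-η)
      have h2 : HasDerivAt (fun z : ℝ => z^3 - z) (3*z^2 - 1) z := by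
        exact ((hasDerivAt_pow 3 z).sub (hasDerivAt_id' z)).congr_deriv (by norm_num)
      have := h2.mul h1.exp
      refine this.congr_deriv ?_
      ring
    have hint : IntervalIntegrable
        (fun z : ℝ => (3*z^2 - 1 - 2*η*(z^4 - z^2)) * Real.exp (-η * z ^ 2))
        volume 0 1 := Jg_intable _ (by continuity) η 0 1
    have := intervalIntegral.integral_eq_sub_of_hasDerivAt h hint
    simpa using this
  have expand : (3 * Jg (fun z => z ^ 2) η - Jg (fun _ => (1:ℝ)) η)
      - 2 * η * (Jg (fun z => z ^ 4) η - Jg (fun z => z ^ 2) η)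
      = ∫ z in (0:ℝ)..1, ((3*z^2 - 1 - 2*η*(z^4 - z^2)) * Real.exp (-η * z ^ 2)) := by
    unfold Jg
    rw [← intervalIntegral.integral_const_mul (3:ℝ),
      ← intervalIntegral.integral_sub
        (by simpa [mul_assoc] using (Jg_intable (fun z => z^2) (by continuity) η 0 1).const_mul 3)
        (Jg_intable _ continuous_const η 0 1),
      ← intervalIntegral.integral_sub (Jg_intable (fun z => z^4) (by continuity) η 0 1)
        (Jg_intable (fun z => z^2) (by continuity) η 0 1),
      ← intervalIntegral.integral_const_mul (2*η),
      ← intervalIntegral.integral_sub]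
    · congr 1; funext z; ring
    · apply IntervalIntegrable.sub
      · simpa [mul_assoc] using (Jg_intable (fun z => z^2) (by continuity) η 0 1).const_mul 3
      · exact Jg_intable _ continuous_const η 0 1
    · apply IntervalIntegrable.const_mul
      apply IntervalIntegrable.sub (Jg_intable (fun z => z^4) (by continuity) η 0 1)
        (Jg_intable (fun z => z^2) (by continuity) η 0 1)
  linarith [expand.trans key]

lemma A0_eq (η : ℝ) : A 0 η = Jg (fun _ => (1:ℝ)) η := by
  unfold A Jg; norm_num

lemma A0_pos (η : ℝ) : 0 < A 0 η := by
  rw [A0_eq]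
  unfold Jg
  apply intervalIntegral.intervalIntegral_pos_of_pos_on
    (Jg_intable _ continuous_const η 0 1)
  · intro x _; simpa using Real.exp_pos _
  · norm_num

lemma Jpp_split (η : ℝ) :
    Jg pp η = Jg (fun z => z ^ 4) η - Jg (fun z => z ^ 2) η
      + (2/15) * Jg (fun _ => (1:ℝ)) η := by
  unfold Jg
  rw [← intervalIntegral.integral_const_mul,
    ← intervalIntegral.integral_sub (Jg_intable (fun z => z^4) (by continuity) η 0 1)
      (Jg_intable (fun z => z^2) (by continuity) η 0 1),
    ← intervalIntegral.integral_add
      ((Jg_intable (fun z => z^4) (by continuity) η 0 1).sub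
        (Jg_intable (fun z => z^2) (by continuity) η 0 1))
      (by simpa [mul_assoc] using (Jg_intable (fun _ => (1:ℝ)) continuous_const η 0 1).const_mul (2/15))]
  congr 1; funext z; unfold pp; ring

lemma psi_zero : Jg pp 0 = 0 := by
  unfold Jg
  have hfun : (fun z : ℝ => pp z * Real.exp (-(0:ℝ) * z ^ 2)) = fun z : ℝ => pp z := by
    funext z; simp
  rw [hfun]
  have h : ∀ x ∈ uIcc (0:ℝ) 1,
      HasDerivAt (fun z : ℝ => z^5/5 - z^3/3 + (2/15)*z) (pp x) x := by
    intro x _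
    have h5 := (hasDerivAt_pow 5 x).div_const 5
    have h3 := (hasDerivAt_pow 3 x).div_const 3
    have h1 := (hasDerivAt_id x).const_mul (2/15:ℝ)
    refine ((h5.sub h3).add h1).congr_deriv ?_
    unfold pp; push_cast; ring
  rw [intervalIntegral.integral_eq_sub_of_hasDerivAt h (pp_cont.intervalIntegrable 0 1)]
  norm_num

lemma B_key (η : ℝ) :
    3 * Real.exp (-η) - (3 - 2 * η + 4 * η ^ 2 / 7.5) * A 0 η
      = -4 * η ^ 2 * Jg pp η := by
  have e1 := I1 η
  have e2 := I2 η
  have e3 := Jpp_split η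
  rw [A0_eq]
  have h75 : (7.5:ℝ) = 15/2 := by norm_num
  rw [h75]
  linear_combination 3 * e1 - 2 * η * e2 + 4 * η ^ 2 * e3

lemma B_zero_iff (η : ℝ) : B η 7.5 = 0 ↔ Jg pp η = 0 := by
  have hA := A0_pos η
  have hk := B_key η
  unfold B
  rw [div_sub' hA.ne', div_eq_zero_iff]
  constructor
  · rintro (h | h)
    · have h4 : -4 * η ^ 2 * Jg pp η = 0 := by linear_combination h - hk
      rcases mul_eq_zero.mp h4 with h5 | h5
      · have hη : η = 0 := by
          rcases mul_eq_zero.mp h5 with h6 | h6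
          · norm_num at h6
          · exact pow_eq_zero_iff (by norm_num) |>.mp h6
        rw [hη]; exact psi_zero
      · exact h5
    · exact absurd h hA.ne'
  · intro h
    left
    linear_combination hk + (-4 * η ^ 2) * h

lemma polyD (a b c d e : ℝ) (x : ℝ) :
    HasDerivAt (fun z : ℝ => a*z^9 + b*z^7 + c*z^5 + d*z^3 + e*z)
      (9*a*x^8 + 7*b*x^6 + 5*c*x^4 + 3*d*x^2 + e) x := by
  have h9 := (hasDerivAt_pow 9 x).const_mul a
  have h7 := (hasDerivAt_pow 7 x).const_mul b
  have h5 := (hasDerivAt_pow 5 x).const_mul c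
  have h3 := (hasDerivAt_pow 3 x).const_mul d
  have h1 := (hasDerivAt_id x).const_mul e
  refine ((((h9.add h7).add h5).add h3).add h1).congr_deriv ?_
  push_cast; ring

lemma polyint (a b c d e lo hi : ℝ) :
    ∫ z in lo..hi, (9*a*z^8 + 7*b*z^6 + 5*c*z^4 + 3*d*z^2 + e)
      = (a*hi^9 + b*hi^7 + c*hi^5 + d*hi^3 + e*hi)
        - (a*lo^9 + b*lo^7 + c*lo^5 + d*lo^3 + e*lo) := by
  have h : ∀ x ∈ uIcc lo hi,
      HasDerivAt (fun z : ℝ => a*z^9 + b*z^7 + c*z^5 + d*z^3 + e*z)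
        (9*a*x^8 + 7*b*x^6 + 5*c*x^4 + 3*d*x^2 + e) x := fun x _ => polyD a b c d e x
  exact intervalIntegral.integral_eq_sub_of_hasDerivAt h
    ((by continuity : Continuous fun z : ℝ => 9*a*z^8 + 7*b*z^6 + 5*c*z^4 + 3*d*z^2 + e).intervalIntegrable lo hi)

-- numeric lemma 1 : ψ(-1/20) < 0

lemma psi_neg : Jg pp (-(1/20)) < 0 := by
  have hpoint : ∀ z ∈ Icc (0:ℝ) 1,
      pp z * Real.exp (-(-(1/20)) * z ^ 2)
        ≤ pp z + (1/20)*(z^2*pp z) + (1/380)*(z^4*(z^4+2/15)) := by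
    intro z hz
    obtain ⟨hz0, hz1⟩ := hz
    set x : ℝ := (1/20) * z^2 with hx
    have hx0 : 0 ≤ x := by positivity
    have hxle : x ≤ 1/20 := by nlinarith
    have hlow : 1 + x ≤ Real.exp x := by linarith [Real.add_one_le_exp x]
    have hup : Real.exp x ≤ 1 + x + (20/19) * x^2 := by
      have h1 : 1 - x ≤ Real.exp (-x) := by linarith [Real.add_one_le_exp (-x)]
      have h2 : (0:ℝ) < 1 - x := by linarith
      have h3 : Real.exp x = 1 / Real.exp (-x) := by
        rw [Real.exp_neg]; field_simp
      have h4 : Real.exp x ≤ 1 / (1 - x) := by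
        rw [h3]
        exact one_div_le_one_div_of_le h2 h1
      have h5 : 1 / (1 - x) ≤ 1 + x + (20/19) * x^2 := by
        rw [div_le_iff₀ h2]
        nlinarith
      linarith
    have hppub : pp z ≤ z^4 + 2/15 := by unfold pp; nlinarith
    have hmain : pp z * Real.exp x ≤ pp z * (1 + x) + (z^4 + 2/15) * ((20/19) * x^2) := by
      have hu0 : 0 ≤ Real.exp x - (1 + x) := by linarith
      have hu1 : Real.exp x - (1 + x) ≤ (20/19) * x^2 := by linarith
      have hnn : (0:ℝ) ≤ z^4 + 2/15 := by positivity
      nlinarith [mul_le_mul_of_nonneg_right hppub hu0,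
        mul_le_mul_of_nonneg_left hu1 hnn]
    have hrw : -(-(1/20)) * z ^ 2 = x := by rw [hx]; ring
    rw [hrw]
    calc pp z * Real.exp x ≤ pp z * (1 + x) + (z^4 + 2/15) * ((20/19) * x^2) := hmain
      _ = pp z + (1/20)*(z^2*pp z) + (1/380)*(z^4*(z^4+2/15)) := by rw [hx]; ring
  have hmono := intervalIntegral.integral_mono_on zero_le_one
    (Jg_intable pp pp_cont (-(1/20)) 0 1)
    ((by unfold pp; continuity : Continuous fun z : ℝ =>
        pp z + (1/20)*(z^2*pp z) + (1/380)*(z^4*(z^4+2/15))).intervalIntegrable 0 1)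
    hpoint
  have hval : ∫ z in (0:ℝ)..1, (pp z + (1/20)*(z^2*pp z) + (1/380)*(z^4*(z^4+2/15)))
      = -163/598500 := by
    have hfun : (fun z : ℝ => pp z + (1/20)*(z^2*pp z) + (1/380)*(z^4*(z^4+2/15)))
        = (fun z : ℝ => 9*(1/3420)*z^8 + 7*(1/140)*z^6 + 5*(5417/28500)*z^4
            + 3*(-149/450)*z^2 + (2/15)) := by
      funext z; unfold pp; ring
    rw [hfun, polyint]; norm_num
  unfold Jg
  calc (∫ z in (0:ℝ)..1, pp z * Real.exp (-(-(1/20)) * z ^ 2)) ≤ -163/598500 :=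
        hval ▸ hmono
    _ < 0 := by norm_num

lemma pp_nonneg_right {z : ℝ} (hz : 23/25 ≤ z) (hz1 : z ≤ 1) : 0 ≤ pp z := by
  unfold pp
  nlinarith [sq_nonneg (z - 23/25), sq_nonneg (z - 1), sq_nonneg (z^2 - 529/625)]

-- numeric lemma 2 : ψ(-100) > 0

lemma psi_pos : 0 < Jg pp (-100) := by
  have f_int : ∀ a b : ℝ, IntervalIntegrable
      (fun z : ℝ => pp z * Real.exp (-(-100:ℝ) * z ^ 2)) volume a b :=
    fun a b => Jg_intable pp pp_cont (-100) a b
  have hsplit : Jg pp (-100)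
      = (∫ z in (0:ℝ)..(23/25), pp z * Real.exp (-(-100:ℝ) * z ^ 2))
        + ((∫ z in (23/25:ℝ)..(19/20), pp z * Real.exp (-(-100:ℝ) * z ^ 2))
          + (∫ z in (19/20:ℝ)..1, pp z * Real.exp (-(-100:ℝ) * z ^ 2))) := by
    unfold Jg
    rw [intervalIntegral.integral_add_adjacent_intervals (f_int (23/25) (19/20)) (f_int (19/20) 1),
      intervalIntegral.integral_add_adjacent_intervals (f_int 0 (23/25)) (f_int (23/25) 1)]
  -- Term 1 lower bound
  have hT1 : (-(23/25) * ((1/8) * Real.exp (2116/25)))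
      ≤ ∫ z in (0:ℝ)..(23/25), pp z * Real.exp (-(-100:ℝ) * z ^ 2) := by
    have hconst : ∫ z in (0:ℝ)..(23/25), (-(1/8) * Real.exp (2116/25)) 
        = -(23/25) * ((1/8) * Real.exp (2116/25)) := by
      rw [intervalIntegral.integral_const]; simp
    rw [← hconst]
    apply intervalIntegral.integral_mono_on (by norm_num)
      (intervalIntegrable_const) (f_int 0 (23/25))
    intro z hz
    obtain ⟨hz0, hz1⟩ := hz
    have hE : (0:ℝ) < Real.exp (-(-100:ℝ) * z ^ 2) := Real.exp_pos _
    have hEle : Real.exp (-(-100:ℝ) * z ^ 2) ≤ Real.exp (2116/25) := by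
      apply Real.exp_le_exp.mpr; nlinarith
    have hpplb : -(1/8) ≤ pp z := by unfold pp; nlinarith [sq_nonneg (z^2 - 1/2)]
    calc -(1/8) * Real.exp (2116/25) ≤ -(1/8) * Real.exp (-(-100:ℝ) * z ^ 2) := by nlinarith
      _ ≤ pp z * Real.exp (-(-100:ℝ) * z ^ 2) := by
          nlinarith [mul_nonneg (by linarith : (0:ℝ) ≤ pp z + 1/8) hE.le]
  -- Term 2 nonneg
  have hT2 : (0:ℝ) ≤ ∫ z in (23/25:ℝ)..(19/20), pp z * Real.exp (-(-100:ℝ) * z ^ 2) := by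
    apply intervalIntegral.integral_nonneg (by norm_num)
    intro z hz
    exact mul_nonneg (pp_nonneg_right hz.1 (by linarith [hz.2])) (Real.exp_pos _).le
  -- Term 3 lower bound
  have hT3 : Real.exp (361/4) * (69901/16000000)
      ≤ ∫ z in (19/20:ℝ)..1, pp z * Real.exp (-(-100:ℝ) * z ^ 2) := by
    have hpoint : ∀ z ∈ Icc (19/20:ℝ) 1,
        Real.exp (361/4) * pp z ≤ pp z * Real.exp (-(-100:ℝ) * z ^ 2) := by
      intro z hz
      obtain ⟨hz0, hz1⟩ := hz
      have hppnn : 0 ≤ pp z := pp_nonneg_right (by linarith) hz1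
      have hEge : Real.exp (361/4) ≤ Real.exp (-(-100:ℝ) * z ^ 2) := by
        apply Real.exp_le_exp.mpr; nlinarith
      nlinarith [Real.exp_pos (361/4:ℝ)]
    have hmono := intervalIntegral.integral_mono_on (by norm_num : (19/20:ℝ) ≤ 1)
      ((continuous_const.mul pp_cont).intervalIntegrable _ _)
      (f_int (19/20) 1) hpoint
    have hval : ∫ z in (19/20:ℝ)..1, Real.exp (361/4) * pp z
        = Real.exp (361/4) * (69901/16000000) := by
      rw [intervalIntegral.integral_const_mul]
      congr 1
      have hfun : (fun z : ℝ => pp z)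
          = (fun z : ℝ => 9*(0:ℝ)*z^8 + 7*(0:ℝ)*z^6 + 5*(1/5)*z^4 + 3*(-1/3)*z^2 + (2/15)) := by
        funext z; unfold pp; ring
      rw [hfun, polyint]; norm_num
    rw [← hval]; exact hmono
  -- exponential comparison
  have hexp : (23/25) * ((1/8) * Real.exp (2116/25))
      < Real.exp (361/4) * (69901/16000000) := by
    have hsum : Real.exp (361/4) = Real.exp (2116/25) * Real.exp (561/100) := by
      rw [← Real.exp_add]; norm_num
    have h5 : Real.exp 5 ≤ Real.exp (561/100) := Real.exp_le_exp.mpr (by norm_num)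
    have hpow : Real.exp 5 = (Real.exp 1) ^ 5 := by
      rw [← Real.exp_nat_mul]; norm_num
    have he1 : (2.7:ℝ) < Real.exp 1 := by
      have := Real.exp_one_gt_d9; linarith
    have h27 : (2.7:ℝ)^5 < (Real.exp 1)^5 := by
      apply pow_lt_pow_left₀ he1 (by norm_num)
      norm_num
    have hbig : (143:ℝ) < Real.exp (561/100) := by
      have : (143:ℝ) < (2.7:ℝ)^5 := by norm_num
      linarith [hpow ▸ h27, h5]
    have hD : (0:ℝ) < Real.exp (2116/25) := Real.exp_pos _
    rw [hsum]
    nlinarith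
  rw [hsplit]
  nlinarith [hT1, hT2, hT3, hexp]

noncomputable def r1 : ℝ := (1 - Real.sqrt (7/15)) / 2

noncomputable def r2 : ℝ := (1 + Real.sqrt (7/15)) / 2

lemma r_sum : r1 + r2 = 1 := by unfold r1 r2; ring

lemma r_prod : r1 * r2 = 2/15 := by
  unfold r1 r2
  have h : Real.sqrt (7/15) ^ 2 = 7/15 := Real.sq_sqrt (by norm_num)
  nlinarith [h]

noncomputable def qq (z : ℝ) : ℝ := (r2 - z ^ 2) * pp z

lemma qq_cont : Continuous qq := by
  unfold qq; exact (continuous_const.sub (by continuity)).mul pp_cont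

lemma hasDerivAt_Phi (η : ℝ) :
    HasDerivAt (fun η => Real.exp (r2 * η) * Jg pp η)
      (Real.exp (r2 * η) * Jg qq η) η := by
  have h1 : HasDerivAt (fun η : ℝ => Real.exp (r2 * η)) (r2 * Real.exp (r2 * η)) η := by
    have := ((hasDerivAt_id η).const_mul r2).exp
    simpa [mul_comm] using this
  have h2 := h1.mul (hasDerivAt_Jg pp pp_cont η)
  refine h2.congr_deriv ?_
  have hsplit : Jg qq η = r2 * Jg pp η + Jg (fun z => -z ^ 2 * pp z) η := by
    rw [← Jg_const_mul r2 pp η,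
      ← Jg_add (fun z => r2 * pp z) (fun z => -z ^ 2 * pp z)
        (continuous_const.mul pp_cont) (by unfold pp; continuity) η]
    apply Jg_congr; intro z; unfold qq; ring
  rw [hsplit]; ring

-- M = exp(r1 η) K(η) has positive derivative exp(r1 η) * Jg (pp^2) η

lemma hasDerivAt_M (η : ℝ) :
    HasDerivAt (fun η => Real.exp (r1 * η) * Jg qq η)
      (Real.exp (r1 * η) * Jg (fun z => pp z ^ 2) η) η := by
  have h1 : HasDerivAt (fun η : ℝ => Real.exp (r1 * η)) (r1 * Real.exp (r1 * η)) η := by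
    have := ((hasDerivAt_id η).const_mul r1).exp
    simpa [mul_comm] using this
  have h2 := h1.mul (hasDerivAt_Jg qq qq_cont η)
  refine h2.congr_deriv ?_
  have hsplit : Jg (fun z => pp z ^ 2) η = r1 * Jg qq η + Jg (fun z => -z ^ 2 * qq z) η := by
    rw [← Jg_const_mul r1 qq η,
      ← Jg_add (fun z => r1 * qq z) (fun z => -z ^ 2 * qq z)
        (continuous_const.mul qq_cont)
        (((continuous_neg.comp (continuous_pow 2)).mul qq_cont : Continuous fun z : ℝ => -z^2 * qq z)) η]
    apply Jg_congr; intro z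
    have hs := r_sum
    have hp := r_prod
    unfold qq pp
    linear_combination -(z^4 - z^2 + 2/15) * hp + (z^4 - z^2 + 2/15) * z^2 * hs
  rw [hsplit]; ring

lemma Jg_ppsq_pos (η : ℝ) : 0 < Jg (fun z => pp z ^ 2) η := by
  unfold Jg
  have hsplit : (∫ z in (0:ℝ)..1, pp z ^ 2 * Real.exp (-η * z ^ 2))
      = (∫ z in (0:ℝ)..(19/20), pp z ^ 2 * Real.exp (-η * z ^ 2))
        + ∫ z in (19/20:ℝ)..1, pp z ^ 2 * Real.exp (-η * z ^ 2) := by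
    rw [intervalIntegral.integral_add_adjacent_intervals
      (Jg_intable (fun z => pp z ^ 2) (pp_cont.pow 2) η 0 (19/20)) (Jg_intable (fun z => pp z ^ 2) (pp_cont.pow 2) η (19/20) 1)]
  rw [hsplit]
  have h1 : (0:ℝ) ≤ ∫ z in (0:ℝ)..(19/20), pp z ^ 2 * Real.exp (-η * z ^ 2) := by
    apply intervalIntegral.integral_nonneg (by norm_num)
    intro z _; positivity
  have h2 : (0:ℝ) < ∫ z in (19/20:ℝ)..1, pp z ^ 2 * Real.exp (-η * z ^ 2) := by
    apply intervalIntegral.intervalIntegral_pos_of_pos_on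
      (Jg_intable (fun z => pp z ^ 2) (pp_cont.pow 2) η (19/20) 1)
    · intro x hx
      have hpp : 0 < pp x := by
        unfold pp; nlinarith [hx.1, hx.2, sq_nonneg (x^2 - 361/400)]
      positivity
    · norm_num
  linarith

lemma M_strictMono : StrictMono (fun η => Real.exp (r1 * η) * Jg qq η) := by
  apply strictMono_of_deriv_pos
  intro x
  rw [(hasDerivAt_M x).deriv]
  exact mul_pos (Real.exp_pos _) (Jg_ppsq_pos x)

lemma three_zeros {x y w : ℝ} (hxy : x < y) (hyw : y < w)
    (hx : Jg pp x = 0) (hy : Jg pp y = 0) (hw : Jg pp w = 0) : False := by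
  set Φ : ℝ → ℝ := fun η => Real.exp (r2 * η) * Jg pp η with hΦ
  have hΦcont : Continuous Φ :=
    continuous_iff_continuousAt.mpr fun η => (hasDerivAt_Phi η).continuousAt
  have hΦx : Φ x = 0 := by rw [hΦ]; simp [hx]
  have hΦy : Φ y = 0 := by rw [hΦ]; simp [hy]
  have hΦw : Φ w = 0 := by rw [hΦ]; simp [hw]
  obtain ⟨u, hu, hu0⟩ := exists_hasDerivAt_eq_zero hxy hΦcont.continuousOn
    (by rw [hΦx, hΦy]) (fun t _ => hasDerivAt_Phi t)
  obtain ⟨v, hv, hv0⟩ := exists_hasDerivAt_eq_zero hyw hΦcont.continuousOn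
    (by rw [hΦy, hΦw]) (fun t _ => hasDerivAt_Phi t)
  have hKu : Jg qq u = 0 :=
    (mul_eq_zero.mp hu0).resolve_left (Real.exp_ne_zero _)
  have hKv : Jg qq v = 0 :=
    (mul_eq_zero.mp hv0).resolve_left (Real.exp_ne_zero _)
  have huv : u < v := lt_trans hu.2 hv.1
  have hlt := M_strictMono huv
  simp only [hKu, hKv, mul_zero] at hlt
  exact lt_irrefl 0 hlt

/-- For `α = 7.5`, `η ↦ B(η, α)` has exactly two zeros: one negative zero and `η = 0`. -/
theorem stmt_1 :
    ∃ η₁ : ℝ, η₁ < 0 ∧ {η : ℝ | B η 7.5 = 0} = ({η₁, 0} : Set ℝ) := by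
  have hcont : Continuous (Jg pp) :=
    continuous_iff_continuousAt.mpr fun η => (hasDerivAt_Jg pp pp_cont η).continuousAt
  have hIVT := intermediate_value_Icc' (by norm_num : (-100:ℝ) ≤ -(1/20))
    hcont.continuousOn
  have h0mem : (0:ℝ) ∈ Icc (Jg pp (-(1/20))) (Jg pp (-100)) :=
    ⟨psi_neg.le, psi_pos.le⟩
  obtain ⟨η₁, hη₁mem, hη₁⟩ := hIVT h0mem
  have hneg : η₁ < 0 := lt_of_le_of_lt hη₁mem.2 (by norm_num)
  refine ⟨η₁, hneg, ?_⟩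
  ext c
  simp only [mem_setOf_eq, mem_insert_iff, mem_singleton_iff]
  rw [B_zero_iff]
  constructor
  · intro hc
    by_contra hcon
    push_neg at hcon
    obtain ⟨hc1, hc2⟩ := hcon
    rcases lt_trichotomy c η₁ with h | h | h
    · exact three_zeros h hneg hc hη₁ psi_zero
    · exact hc1 h
    · rcases lt_trichotomy c 0 with h' | h' | h'
      · exact three_zeros h h' hη₁ hc psi_zero
      · exact hc2 h'
      · exact three_zeros hneg h' hη₁ psi_zero hc
  · rintro (rfl | rfl)
    · exact hη₁
    · exact psi_zero
end

section
/- There exists α* ∈ (20/3, 7.5) such that: for every α with α* < α < 7.5, the function η ↦ B(η, α) has exactly three zeros, namely two distinct negative zeros and the zero η = 0; for α = α*, it has exactly two zeros, namely one negative zero and the zero η = 0; and for every α with 0 < α < α*, its only zero is η = 0. -/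
open Real MeasureTheory Set Filter

lemma hd_conv {f : ℝ → ℝ} {f' g' x : ℝ} (h : HasDerivAt f g' x) (e : f' = g') :
    HasDerivAt f f' x := e ▸ h

lemma contInt (k : ℕ) (η : ℝ) : Continuous (fun z : ℝ => z ^ k * Real.exp (-η * z ^ 2)) := by
  fun_prop

lemma intA (k : ℕ) (η : ℝ) :
    IntervalIntegrable (fun z : ℝ => z ^ k * Real.exp (-η * z ^ 2)) volume 0 1 :=
  (contInt k η).intervalIntegrable _ _

lemma A_pos (k : ℕ) (η : ℝ) : 0 < A k η := by
  apply intervalIntegral.intervalIntegral_pos_of_pos_on (intA k η)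
  · intro x hx
    exact mul_pos (pow_pos hx.1 k) (exp_pos _)
  · norm_num

noncomputable def G (η : ℝ) : ℝ := A 2 η - A 4 η

lemma G_int (η : ℝ) :
    G η = ∫ z in (0:ℝ)..1, (z ^ 2 - z ^ 4) * Real.exp (-η * z ^ 2) := by
  rw [G, A, A, ← intervalIntegral.integral_sub (intA 2 η) (intA 4 η)]
  congr 1
  ext z
  ring

lemma G_pos (η : ℝ) : 0 < G η := by
  rw [G_int]
  apply intervalIntegral.intervalIntegral_pos_of_pos_on
  · exact ((continuous_pow 2).sub (continuous_pow 4)).mul (by fun_prop) |>.intervalIntegrable _ _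
  · intro x hx
    obtain ⟨h0, h2⟩ := hx
    have h1 : x ^ 4 < x ^ 2 := by
      have : x ^ 2 < 1 := by nlinarith
      calc x ^ 4 = x ^ 2 * x ^ 2 := by ring
        _ < 1 * x ^ 2 := mul_lt_mul_of_pos_right this (pow_pos h0 2)
        _ = x ^ 2 := by ring
    have := exp_pos (-η * x ^ 2)
    nlinarith
  · norm_num

lemma hasDerivAt_A (k : ℕ) (η₀ : ℝ) : HasDerivAt (A k) (-(A (k + 2) η₀)) η₀ := by
  have key := intervalIntegral.hasDerivAt_integral_of_dominated_loc_of_deriv_le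
    (F := fun η z => z ^ k * Real.exp (-η * z ^ 2))
    (F' := fun η z => -(z ^ (k + 2) * Real.exp (-η * z ^ 2)))
    (x₀ := η₀) (a := 0) (b := 1) (bound := fun _ => Real.exp (|η₀| + 1)) (s := Metric.ball η₀ 1)
    (Metric.ball_mem_nhds η₀ one_pos)
    (Filter.Eventually.of_forall fun η => ((contInt k η).aestronglyMeasurable))
    (intA k η₀)
    ((contInt (k + 2) η₀).neg.aestronglyMeasurable)
    ?_ (intervalIntegrable_const) ?_
  · have h2 : (∫ z in (0:ℝ)..1, -(z ^ (k+2) * Real.exp (-η₀ * z ^ 2)))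
        = -(A (k+2) η₀) := by
      rw [intervalIntegral.integral_neg]; rfl
    rw [← h2]
    exact key.2
  · refine Filter.Eventually.of_forall fun z => fun hz η hη => ?_
    have hz' : z ∈ Set.Ioc (0:ℝ) 1 := by
      simpa [Set.uIoc_of_le (zero_le_one)] using hz
    have hz0 : 0 ≤ z := le_of_lt hz'.1
    have hz1 : z ≤ 1 := hz'.2
    have hzp : z ^ (k + 2) ≤ 1 := pow_le_one₀ hz0 hz1
    have hzz : z ^ 2 ≤ 1 := pow_le_one₀ hz0 hz1
    have hη' : |η| ≤ |η₀| + 1 := by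
      have := abs_sub_abs_le_abs_sub η η₀
      have : |η - η₀| < 1 := by simpa [Real.dist_eq] using hη
      have := abs_sub_abs_le_abs_sub η η₀
      linarith [abs_sub_abs_le_abs_sub η η₀]
    have hexp : Real.exp (-η * z ^ 2) ≤ Real.exp (|η₀| + 1) := by
      apply Real.exp_le_exp.2
      have h1 : -η * z ^ 2 ≤ |η| * z ^ 2 := by
        apply mul_le_mul_of_nonneg_right (neg_le_abs η) (sq_nonneg z)
      have h2 : |η| * z ^ 2 ≤ |η| := by
        nlinarith [abs_nonneg η, sq_nonneg z]
      linarith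
    rw [norm_neg, norm_mul, norm_pow]
    calc ‖z‖ ^ (k+2) * ‖Real.exp (-η * z ^ 2)‖
        = z ^ (k+2) * Real.exp (-η * z ^ 2) := by
          rw [Real.norm_eq_abs, Real.norm_eq_abs, abs_of_nonneg hz0,
            abs_of_nonneg (Real.exp_nonneg _)]
      _ ≤ 1 * Real.exp (|η₀| + 1) := by
          apply mul_le_mul hzp hexp (Real.exp_nonneg _) zero_le_one
      _ = Real.exp (|η₀| + 1) := one_mul _
  · refine Filter.Eventually.of_forall fun z => fun _ η _ => ?_
    have h : HasDerivAt (fun η : ℝ => -η * z ^ 2) (-z^2) η := by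
      simpa using ((hasDerivAt_id η).neg.mul_const (z ^ 2))
    have h2 := (h.exp).const_mul (z ^ k)
    refine hd_conv h2 ?_
    show -(z ^ (k + 2) * rexp (-η * z ^ 2)) = _
    rw [pow_add]
    ring

lemma contA (k : ℕ) : Continuous (A k) := by
  have : Differentiable ℝ (A k) := fun η => (hasDerivAt_A k η).differentiableAt
  exact this.continuous

lemma key_identity (η : ℝ) :
    3 * Real.exp (-η) - (3 - 2 * η) * A 0 η = 4 * η ^ 2 * G η := by
  -- (I1): A 0 η - 2 η A 2 η = exp (-η)
  have I1 : A 0 η - 2 * η * A 2 η = Real.exp (-η) := by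
    have hd : ∀ z ∈ Set.uIcc (0:ℝ) 1,
        HasDerivAt (fun z : ℝ => z * Real.exp (-η * z ^ 2))
          ((1 - 2 * η * z ^ 2) * Real.exp (-η * z ^ 2)) z := by
      intro z _
      have h1 : HasDerivAt (fun z : ℝ => -η * z ^ 2) (-η * (2 * z)) z := by
        simpa using ((hasDerivAt_pow 2 z).const_mul (-η))
      have h2 := (hasDerivAt_id z).mul h1.exp
      simp only [id_eq] at h2
      refine hd_conv h2 ?_
      ring
    have hint : IntervalIntegrable
        (fun z : ℝ => (1 - 2 * η * z ^ 2) * Real.exp (-η * z ^ 2)) volume 0 1 := by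
      apply Continuous.intervalIntegrable; fun_prop
    have := intervalIntegral.integral_eq_sub_of_hasDerivAt hd hint
    simp only [one_pow, mul_one, zero_mul, mul_zero, sub_zero] at this
    have hsplit : (∫ z in (0:ℝ)..1, (1 - 2 * η * z ^ 2) * Real.exp (-η * z ^ 2))
        = A 0 η - 2 * η * A 2 η := by
      rw [A, A, ← intervalIntegral.integral_const_mul,
        ← intervalIntegral.integral_sub (intA 0 η)]
      · congr 1; ext z; ring
      · exact (intA 2 η).const_mul _
    rw [hsplit] at this
    rw [this]
    norm_num
  -- (I2): A 0 η - 3 A 2 η = 2 η G η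
  have I2 : A 0 η - 3 * A 2 η = 2 * η * G η := by
    have hd : ∀ z ∈ Set.uIcc (0:ℝ) 1,
        HasDerivAt (fun z : ℝ => (z - z ^ 3) * Real.exp (-η * z ^ 2))
          ((1 - 3 * z ^ 2 - 2 * η * (z ^ 2 - z ^ 4)) * Real.exp (-η * z ^ 2)) z := by
      intro z _
      have h1 : HasDerivAt (fun z : ℝ => -η * z ^ 2) (-η * (2 * z)) z := by
        simpa using ((hasDerivAt_pow 2 z).const_mul (-η))
      have h0 : HasDerivAt (fun z : ℝ => z - z ^ 3) (1 - 3 * z ^ 2) z := by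
        simpa using ((hasDerivAt_id z).fun_sub (hasDerivAt_pow 3 z))
      have h2 := h0.mul h1.exp
      refine hd_conv h2 ?_
      ring
    have hint : IntervalIntegrable
        (fun z : ℝ => (1 - 3 * z ^ 2 - 2 * η * (z ^ 2 - z ^ 4)) * Real.exp (-η * z ^ 2))
        volume 0 1 := by
      apply Continuous.intervalIntegrable; fun_prop
    have := intervalIntegral.integral_eq_sub_of_hasDerivAt hd hint
    have hsplit : (∫ z in (0:ℝ)..1,
        (1 - 3 * z ^ 2 - 2 * η * (z ^ 2 - z ^ 4)) * Real.exp (-η * z ^ 2))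
        = A 0 η - 3 * A 2 η - 2 * η * G η := by
      rw [G_int, A, A, ← intervalIntegral.integral_const_mul,
        ← intervalIntegral.integral_const_mul]
      rw [← intervalIntegral.integral_sub (intA 0 η) ((intA 2 η).const_mul 3),
        ← intervalIntegral.integral_sub (((intA 0 η).sub ((intA 2 η).const_mul 3)))]
      · congr 1; ext z; ring
      · apply IntervalIntegrable.const_mul
        apply Continuous.intervalIntegrable; fun_prop
    rw [hsplit] at this
    norm_num at this
    linarith
  have : 3 * (A 0 η - 2 * η * A 2 η) - (3 - 2 * η) * A 0 η = 2 * η * (A 0 η - 3 * A 2 η) := by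
    ring
  rw [I1, I2] at this
  rw [this]
  ring

lemma B_zero_iff_s2 {α : ℝ} (hα : 0 < α) (η : ℝ) :
    B η α = 0 ↔ η = 0 ∨ A 0 η = α * G η := by
  have hA := A_pos 0 η
  have hkey := key_identity η
  have h3 : 3 * Real.exp (-η) = (3 - 2 * η) * A 0 η + 4 * η ^ 2 * G η := by linarith
  have hB : B η α = 4 * η ^ 2 * (α * G η - A 0 η) / (α * A 0 η) := by
    rw [B, h3]
    field_simp
    ring
  rw [hB, div_eq_zero_iff]
  have hden : α * A 0 η ≠ 0 := by positivity
  constructor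
  · intro h
    rcases h with h | h
    · rcases mul_eq_zero.1 h with h5 | h5
      · left
        have h6 : η ^ 2 = 0 := by linarith
        exact pow_eq_zero_iff (two_ne_zero) |>.1 h6
      · right; linarith
    · exact absurd h hden
  · intro h
    rcases h with h | h
    · left; rw [h]; ring
    · left; rw [h]; ring

noncomputable def Q (η : ℝ) : ℝ := A 0 η * (A 4 η - A 6 η) - A 2 η * G η

lemma contQ : Continuous Q := by
  unfold Q G
  exact ((contA 0).mul ((contA 4).sub (contA 6))).sub
    ((contA 2).mul ((contA 2).sub (contA 4)))

lemma hasDerivAt_Q (η : ℝ) :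
    HasDerivAt Q (A 2 η * A 4 η - A 0 η * A 6 η + A 0 η * A 8 η - A 4 η ^ 2) η := by
  have h0 := hasDerivAt_A 0 η
  have h2 := hasDerivAt_A 2 η
  have h4 := hasDerivAt_A 4 η
  have h6 := hasDerivAt_A 6 η
  have h8 := hasDerivAt_A 8 η
  norm_num at h0 h2 h4 h6 h8
  have hh := (h0.fun_mul (h4.fun_sub h6)).fun_sub (h2.fun_mul (h2.fun_sub h4))
  have : Q = fun x => A 0 x * (A 4 x - A 6 x) - A 2 x * (A 2 x - A 4 x) := by
    funext x; rw [Q, G]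
  rw [this]
  refine hd_conv hh ?_
  ring

lemma integral_pos_of_pos_at_one {f : ℝ → ℝ} (hc : Continuous f) (h0 : ∀ x, 0 ≤ f x)
    (h1 : 0 < f 1) : 0 < ∫ z in (0:ℝ)..1, f z := by
  obtain ⟨δ, hδ, hball⟩ := Metric.continuousAt_iff.1 hc.continuousAt (f 1 / 2) (by positivity)
  set a : ℝ := max (1 - δ / 2) 0 with ha
  have ha0 : 0 ≤ a := le_max_right _ _
  have ha1 : a < 1 := by
    apply max_lt _ one_pos
    linarith
  have hflow : ∀ x ∈ Set.Icc a 1, f 1 / 2 ≤ f x := by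
    intro x hx
    have hxa : 1 - δ / 2 ≤ x := le_trans (le_max_left _ _) hx.1
    have hdist : dist x 1 < δ := by
      rw [Real.dist_eq, abs_sub_lt_iff]
      constructor <;> [linarith [hx.2]; linarith]
    have := hball hdist
    rw [Real.dist_eq, abs_sub_lt_iff] at this
    linarith [this.1]
  have hsplit : (∫ z in (0:ℝ)..1, f z) = (∫ z in (0:ℝ)..a, f z) + ∫ z in a..(1:ℝ), f z :=
    (intervalIntegral.integral_add_adjacent_intervals
      (hc.intervalIntegrable 0 a) (hc.intervalIntegrable a 1)).symm
  have h2 : 0 ≤ ∫ z in (0:ℝ)..a, f z :=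
    intervalIntegral.integral_nonneg ha0 (fun x _ => h0 x)
  have h3 : (1 - a) * (f 1 / 2) ≤ ∫ z in a..(1:ℝ), f z := by
    have := intervalIntegral.integral_mono_on (μ := volume) (le_of_lt ha1)
      (intervalIntegrable_const (c := f 1 / 2)) (hc.intervalIntegrable a 1) hflow
    rw [intervalIntegral.integral_const] at this
    simpa [smul_eq_mul] using this
  have h4 : 0 < (1 - a) * (f 1 / 2) := by
    apply mul_pos (by linarith) (by positivity)
  linarith [hsplit, h2, h3, h4]

noncomputable def W (η : ℝ) : ℝ := A 4 η - 2 * A 6 η + A 8 η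

lemma integral_sum_A (η : ℝ) (N : ℕ) (c : ℕ → ℝ) (k : ℕ → ℕ) :
    (∫ z in (0:ℝ)..1, (∑ i ∈ Finset.range N, c i * z ^ k i) * Real.exp (-η * z ^ 2))
      = ∑ i ∈ Finset.range N, c i * A (k i) η := by
  have e : ∀ z : ℝ, (∑ i ∈ Finset.range N, c i * z ^ k i) * Real.exp (-η * z ^ 2)
      = ∑ i ∈ Finset.range N, c i * (z ^ k i * Real.exp (-η * z ^ 2)) := by
    intro z
    rw [Finset.sum_mul]
    exact Finset.sum_congr rfl fun i _ => by ring
  rw [intervalIntegral.integral_congr (fun z _ => e z)]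
  rw [intervalIntegral.integral_finset_sum
    (fun i _ => ((intA (k i) η).const_mul (c i)))]
  exact Finset.sum_congr rfl fun i _ => intervalIntegral.integral_const_mul _ _

open Fin.NatCast in
lemma CS (η : ℝ) : G η ^ 2 < A 0 η * W η := by
  have hA := A_pos 0 η
  have hG := G_pos η
  set a := A 0 η with ha
  set g := G η with hg
  have hint : (∫ z in (0:ℝ)..1, (a * (z ^ 2 - z ^ 4) - g) ^ 2 * Real.exp (-η * z ^ 2))
      = a ^ 2 * W η - a * g ^ 2 := by
    have e : ∀ z : ℝ, (a * (z ^ 2 - z ^ 4) - g) ^ 2 * Real.exp (-η * z ^ 2)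
        = (∑ i ∈ Finset.range 5,
            (![g ^ 2, -2 * a * g, a ^ 2 + 2 * a * g, -2 * a ^ 2, a ^ 2] i)
              * z ^ (![0, 2, 4, 6, 8] i)) * Real.exp (-η * z ^ 2) := by
      intro z
      congr 1
      simp [Finset.sum_range_succ]
      ring
    rw [intervalIntegral.integral_congr (fun z _ => e z), integral_sum_A]
    simp [Finset.sum_range_succ]
    have hG2 : A 2 η - A 4 η = g := rfl
    rw [W]
    linear_combination (-(g ^ 2)) * ha + (-(2 * a * g)) * hG2
  have hpos : 0 < ∫ z in (0:ℝ)..1, (a * (z ^ 2 - z ^ 4) - g) ^ 2 * Real.exp (-η * z ^ 2) := by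
    apply integral_pos_of_pos_at_one
    · fun_prop
    · intro x; positivity
    · have : ((1:ℝ) ^ 2 - 1 ^ 4) = 0 := by norm_num
      have h1 : (a * ((1:ℝ) ^ 2 - 1 ^ 4) - g) ^ 2 = g ^ 2 := by rw [this]; ring
      rw [h1]
      positivity
  rw [hint] at hpos
  nlinarith

lemma exp_tail (N : ℕ) : ∀ x : ℝ, 0 ≤ x →
    Real.exp x ≤ (∑ n ∈ Finset.range N, x ^ n / n.factorial)
      + x ^ N / N.factorial * Real.exp x := by
  induction N with
  | zero => intro x hx; simp
  | succ N ih =>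
    intro x hx
    set φ : ℝ → ℝ := fun x => (∑ n ∈ Finset.range (N + 1), x ^ n / n.factorial)
      + x ^ (N + 1) / (N + 1).factorial * Real.exp x - Real.exp x with hφ
    have hφ0 : φ 0 = 0 := by
      simp [hφ, Finset.sum_range_succ']
    have hd : ∀ y : ℝ, HasDerivAt φ
        ((∑ n ∈ Finset.range N, y ^ n / n.factorial)
          + y ^ N / N.factorial * Real.exp y
          + y ^ (N + 1) / (N + 1).factorial * Real.exp y - Real.exp y) y := by
      intro y
      have hsum : HasDerivAt (fun x : ℝ => ∑ n ∈ Finset.range (N + 1), x ^ n / n.factorial)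
          (∑ n ∈ Finset.range N, y ^ n / n.factorial) y := by
        have : HasDerivAt (fun x : ℝ => ∑ n ∈ Finset.range (N + 1), x ^ n / n.factorial)
            (∑ n ∈ Finset.range (N + 1), (n : ℝ) * y ^ (n - 1) / n.factorial) y := by
          apply HasDerivAt.fun_sum
          intro n _
          simpa [div_eq_mul_inv] using (hasDerivAt_pow n y).mul_const ((n.factorial : ℝ))⁻¹
        convert this using 1
        rw [Finset.sum_range_succ' (fun n => (n : ℝ) * y ^ (n - 1) / n.factorial) N]
        simp only [Nat.cast_zero, zero_mul, Nat.factorial_zero, Nat.cast_one, zero_div, add_zero]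
        apply Finset.sum_congr rfl
        intro n _
        have : ((n + 1 : ℕ) : ℝ) ≠ 0 := by positivity
        rw [Nat.factorial_succ]
        push_cast
        field_simp
      have hpow : HasDerivAt (fun x : ℝ => x ^ (N + 1) / (N + 1).factorial * Real.exp x)
          (((N + 1 : ℕ) : ℝ) * y ^ N / (N + 1).factorial * Real.exp y
            + y ^ (N + 1) / (N + 1).factorial * Real.exp y) y := by
        have h1 : HasDerivAt (fun x : ℝ => x ^ (N + 1) / (N + 1).factorial)
            (((N + 1 : ℕ) : ℝ) * y ^ N / (N + 1).factorial) y := by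
          simpa [div_eq_mul_inv] using
            (hasDerivAt_pow (N + 1) y).mul_const (((N + 1).factorial : ℝ))⁻¹
        simpa using h1.fun_mul (Real.hasDerivAt_exp y)
      have := (hsum.add hpow).sub (Real.hasDerivAt_exp y)
      refine hd_conv this ?_
      have hfac : ((N + 1).factorial : ℝ) = ((N + 1 : ℕ) : ℝ) * (N.factorial : ℝ) := by
        rw [Nat.factorial_succ]; push_cast; ring
      have h2 : ((N + 1 : ℕ) : ℝ) * y ^ N / (N + 1).factorial * Real.exp y
          = y ^ N / N.factorial * Real.exp y := by
        rw [hfac]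
        have : ((N + 1 : ℕ) : ℝ) ≠ 0 := by positivity
        field_simp
      rw [h2]
      ring
    have hmono : MonotoneOn φ (Set.Ici (0 : ℝ)) := by
      apply monotoneOn_of_deriv_nonneg (convex_Ici 0)
      · exact (Differentiable.continuous (fun y => (hd y).differentiableAt)).continuousOn
      · intro y _
        exact (hd y).differentiableAt.differentiableWithinAt
      · intro y hy
        rw [interior_Ici] at hy
        rw [(hd y).deriv]
        have hy0 : (0:ℝ) ≤ y := le_of_lt hy
        have h1 := ih y hy0
        have h2 : 0 ≤ y ^ (N + 1) / (N + 1).factorial * Real.exp y := by positivity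
        linarith
    have := hmono (Set.self_mem_Ici) (Set.mem_Ici.2 hx) hx
    rw [hφ0] at this
    simp only [hφ] at this
    linarith

lemma integral_poly (N : ℕ) (k : ℕ) (w : ℝ) :
    (∫ z in (0:ℝ)..1, ∑ n ∈ Finset.range N, w ^ n / n.factorial * z ^ (2 * n + k))
      = ∑ n ∈ Finset.range N, w ^ n / (n.factorial * (2 * n + k + 1)) := by
  rw [intervalIntegral.integral_finset_sum (fun n _ =>
    ((continuous_pow (2 * n + k)).intervalIntegrable 0 1).const_mul _)]
  apply Finset.sum_congr rfl
  intro n _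
  rw [intervalIntegral.integral_const_mul, integral_pow]
  have : ((2 * n + k : ℕ) : ℝ) + 1 ≠ 0 := by positivity
  field_simp
  rw [one_pow, zero_pow (by positivity), sub_zero]; push_cast; ring

lemma sum_poly_eq (N k : ℕ) (w z : ℝ) :
    (∑ n ∈ Finset.range N, w ^ n / n.factorial * z ^ (2 * n + k))
      = z ^ k * ∑ n ∈ Finset.range N, (w * z ^ 2) ^ n / n.factorial := by
  rw [Finset.mul_sum]
  apply Finset.sum_congr rfl
  intro n _
  rw [mul_pow, pow_add, pow_mul]
  ring

lemma A_lower (k N : ℕ) (w : ℝ) (hw : 0 ≤ w) :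
    (∑ n ∈ Finset.range N, w ^ n / (n.factorial * (2 * n + k + 1))) ≤ A k (-w) := by
  rw [A, ← integral_poly N k w]
  apply intervalIntegral.integral_mono_on zero_le_one
    (by apply Continuous.intervalIntegrable; fun_prop) (intA k (-w))
  intro z hz
  rw [sum_poly_eq]
  have hz0 : 0 ≤ z := hz.1
  have h1 : (∑ n ∈ Finset.range N, (w * z ^ 2) ^ n / n.factorial) ≤ Real.exp (w * z ^ 2) :=
    Real.sum_le_exp_of_nonneg (by positivity) N
  have h2 : Real.exp (w * z ^ 2) = Real.exp (-(-w) * z ^ 2) := by norm_num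
  calc z ^ k * ∑ n ∈ Finset.range N, (w * z ^ 2) ^ n / n.factorial
      ≤ z ^ k * Real.exp (w * z ^ 2) :=
        mul_le_mul_of_nonneg_left h1 (pow_nonneg hz0 k)
    _ = z ^ k * Real.exp (-(-w) * z ^ 2) := by rw [h2]

lemma A_upper (k N : ℕ) (w E : ℝ) (hw : 0 ≤ w) (hE : Real.exp w ≤ E) :
    A k (-w) ≤ (∑ n ∈ Finset.range N, w ^ n / (n.factorial * (2 * n + k + 1)))
      + w ^ N / (N.factorial * (2 * N + k + 1)) * E := by
  have key : ∀ z ∈ Set.Icc (0:ℝ) 1, z ^ k * Real.exp (-(-w) * z ^ 2)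
      ≤ (∑ n ∈ Finset.range N, w ^ n / n.factorial * z ^ (2 * n + k))
        + w ^ N / N.factorial * E * z ^ (2 * N + k) := by
    intro z hz
    have hz0 : 0 ≤ z := hz.1
    have hz1 : z ≤ 1 := hz.2
    have hx : (0:ℝ) ≤ w * z ^ 2 := by positivity
    have h1 := exp_tail N (w * z ^ 2) hx
    have hexpw : Real.exp (w * z ^ 2) ≤ E := by
      refine le_trans (Real.exp_le_exp.2 ?_) hE
      nlinarith [pow_le_one₀ hz0 hz1 (n := 2)]
    have hEpos : 0 < Real.exp (w * z ^ 2) := Real.exp_pos _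
    have h2 : Real.exp (w * z ^ 2)
        ≤ (∑ n ∈ Finset.range N, (w * z ^ 2) ^ n / n.factorial)
          + (w * z ^ 2) ^ N / N.factorial * E := by
      have : (w * z ^ 2) ^ N / N.factorial * Real.exp (w * z ^ 2)
          ≤ (w * z ^ 2) ^ N / N.factorial * E := by
        apply mul_le_mul_of_nonneg_left hexpw (by positivity)
      linarith
    have h3 : z ^ k * Real.exp (-(-w) * z ^ 2) = z ^ k * Real.exp (w * z ^ 2) := by norm_num
    rw [h3]
    have h4 : z ^ k * ((w * z ^ 2) ^ N / N.factorial * E)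
        = w ^ N / N.factorial * E * z ^ (2 * N + k) := by
      rw [mul_pow, ← pow_mul, pow_add]
      ring
    calc z ^ k * Real.exp (w * z ^ 2)
        ≤ z ^ k * ((∑ n ∈ Finset.range N, (w * z ^ 2) ^ n / n.factorial)
            + (w * z ^ 2) ^ N / N.factorial * E) :=
          mul_le_mul_of_nonneg_left h2 (pow_nonneg hz0 k)
      _ = (∑ n ∈ Finset.range N, w ^ n / n.factorial * z ^ (2 * n + k))
            + w ^ N / N.factorial * E * z ^ (2 * N + k) := by
          rw [mul_add, ← sum_poly_eq, h4]
  have hmono := intervalIntegral.integral_mono_on zero_le_one (intA k (-w))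
    (by apply Continuous.intervalIntegrable
        apply Continuous.add
        · apply continuous_finset_sum; intro n _; fun_prop
        · fun_prop) key
  rw [A]
  refine le_trans hmono ?_
  rw [intervalIntegral.integral_add
    (by apply Continuous.intervalIntegrable
        apply continuous_finset_sum; intro n _; fun_prop)
    (((continuous_pow (2 * N + k)).intervalIntegrable 0 1).const_mul _)]
  rw [integral_poly, intervalIntegral.integral_const_mul, integral_pow]
  have : ((2 * N + k : ℕ) : ℝ) + 1 ≠ 0 := by positivity
  apply add_le_add le_rfl
  rw [one_pow, zero_pow (by positivity), sub_zero]
  apply le_of_eq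
  field_simp
  push_cast; ring

lemma expE21 {x : ℝ} (hx : x ≤ 3) : Real.exp x ≤ 21 := by
  have h1 : Real.exp x ≤ Real.exp 3 := Real.exp_le_exp.2 hx
  have h2 : Real.exp 3 = Real.exp 1 ^ 3 := by
    rw [← Real.exp_nat_mul]; norm_num
  have h3 : Real.exp 1 ^ 3 ≤ 2.7182818286 ^ 3 := by
    apply pow_le_pow_left₀ (Real.exp_pos 1).le Real.exp_one_lt_d9.le
  nlinarith
lemma expE149 {x : ℝ} (hx : x ≤ 5) : Real.exp x ≤ 149 := by
  have h1 : Real.exp x ≤ Real.exp 5 := Real.exp_le_exp.2 hx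
  have h2 : Real.exp 5 = Real.exp 1 ^ 5 := by
    rw [← Real.exp_nat_mul]; norm_num
  have h3 : Real.exp 1 ^ 5 ≤ 2.7182818286 ^ 5 := by
    apply pow_le_pow_left₀ (Real.exp_pos 1).le Real.exp_one_lt_d9.le
  nlinarith
lemma Alo_1_0 : (2577529254793/1000000000000 : ℝ) ≤ A 0 (-(54/25)) := by
  refine le_trans ?_ (A_lower 0 14 (54/25) (by norm_num))
  norm_num [Finset.sum_range_succ, Nat.factorial]

lemma Ahi_1_0 : A 0 (-(54/25)) ≤ (2577529654523/1000000000000 : ℝ) := by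
  refine le_trans (A_upper 0 14 (54/25) 21 (by norm_num) (expE21 (by norm_num))) ?_
  norm_num [Finset.sum_range_succ, Nat.factorial]

lemma Alo_1_2 : (440799211/312500000 : ℝ) ≤ A 2 (-(54/25)) := by
  refine le_trans ?_ (A_lower 2 14 (54/25) (by norm_num))
  norm_num [Finset.sum_range_succ, Nat.factorial]

lemma Ahi_1_2 : A 2 (-(54/25)) ≤ (1410557849141/1000000000000 : ℝ) := by
  refine le_trans (A_upper 2 14 (54/25) 21 (by norm_num) (expE21 (by norm_num))) ?_
  norm_num [Finset.sum_range_succ, Nat.factorial]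

lemma Alo_1_4 : (1027653955479/1000000000000 : ℝ) ≤ A 4 (-(54/25)) := by
  refine le_trans ?_ (A_lower 4 14 (54/25) (by norm_num))
  norm_num [Finset.sum_range_succ, Nat.factorial]

lemma Ahi_1_4 : A 4 (-(54/25)) ≤ (1027654306757/1000000000000 : ℝ) := by
  refine le_trans (A_upper 4 14 (54/25) 21 (by norm_num) (expE21 (by norm_num))) ?_
  norm_num [Finset.sum_range_succ, Nat.factorial]

lemma Alo_1_6 : (817793450383/1000000000000 : ℝ) ≤ A 6 (-(54/25)) := by
  refine le_trans ?_ (A_lower 6 14 (54/25) (by norm_num))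
  norm_num [Finset.sum_range_succ, Nat.factorial]

lemma Ahi_1_6 : A 6 (-(54/25)) ≤ (204448445397/250000000000 : ℝ) := by
  refine le_trans (A_upper 6 14 (54/25) 21 (by norm_num) (expE21 (by norm_num))) ?_
  norm_num [Finset.sum_range_succ, Nat.factorial]

lemma Alo_1_8 : (682079468427/1000000000000 : ℝ) ≤ A 8 (-(54/25)) := by
  refine le_trans ?_ (A_lower 8 14 (54/25) (by norm_num))
  norm_num [Finset.sum_range_succ, Nat.factorial]

lemma Ahi_1_8 : A 8 (-(54/25)) ≤ (682079781729/1000000000000 : ℝ) := by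
  refine le_trans (A_upper 8 14 (54/25) 21 (by norm_num) (expE21 (by norm_num))) ?_
  norm_num [Finset.sum_range_succ, Nat.factorial]

lemma Alo_2_0 : (2620312122429/1000000000000 : ℝ) ≤ A 0 (-(219/100)) := by
  refine le_trans ?_ (A_lower 0 14 (219/100) (by norm_num))
  norm_num [Finset.sum_range_succ, Nat.factorial]

lemma Ahi_2_0 : A 0 (-(219/100)) ≤ (524062521461/200000000000 : ℝ) := by
  refine le_trans (A_upper 0 14 (219/100) 21 (by norm_num) (expE21 (by norm_num))) ?_
  norm_num [Finset.sum_range_succ, Nat.factorial]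

lemma Alo_2_2 : (1441758186319/1000000000000 : ℝ) ≤ A 2 (-(219/100)) := by
  refine le_trans ?_ (A_lower 2 14 (219/100) (by norm_num))
  norm_num [Finset.sum_range_succ, Nat.factorial]

lemma Ahi_2_2 : A 2 (-(219/100)) ≤ (1441758639913/1000000000000 : ℝ) := by
  refine le_trans (A_upper 2 14 (219/100) 21 (by norm_num) (expE21 (by norm_num))) ?_
  norm_num [Finset.sum_range_succ, Nat.factorial]

lemma Alo_2_4 : (526248673269/500000000000 : ℝ) ≤ A 4 (-(219/100)) := by
  refine le_trans ?_ (A_lower 4 14 (219/100) (by norm_num))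
  norm_num [Finset.sum_range_succ, Nat.factorial]

lemma Ahi_2_4 : A 4 (-(219/100)) ≤ (526248886321/500000000000 : ℝ) := by
  refine le_trans (A_upper 4 14 (219/100) 21 (by norm_num) (expE21 (by norm_num))) ?_
  norm_num [Finset.sum_range_succ, Nat.factorial]

lemma Alo_2_6 : (419260978019/500000000000 : ℝ) ≤ A 6 (-(219/100)) := by
  refine le_trans ?_ (A_lower 6 14 (219/100) (by norm_num))
  norm_num [Finset.sum_range_succ, Nat.factorial]

lemma Ahi_2_6 : A 6 (-(219/100)) ≤ (419261178897/500000000000 : ℝ) := by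
  refine le_trans (A_upper 6 14 (219/100) 21 (by norm_num) (expE21 (by norm_num))) ?_
  norm_num [Finset.sum_range_succ, Nat.factorial]

lemma Alo_2_8 : (139979871023/200000000000 : ℝ) ≤ A 8 (-(219/100)) := by
  refine le_trans ?_ (A_lower 8 14 (219/100) (by norm_num))
  norm_num [Finset.sum_range_succ, Nat.factorial]

lemma Ahi_2_8 : A 8 (-(219/100)) ≤ (349949867577/500000000000 : ℝ) := by
  refine le_trans (A_upper 8 14 (219/100) 21 (by norm_num) (expE21 (by norm_num))) ?_
  norm_num [Finset.sum_range_succ, Nat.factorial]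

lemma Alo_3_0 : (4293039443439/250000000000 : ℝ) ≤ A 0 (-(5)) := by
  refine le_trans ?_ (A_lower 0 26 (5) (by norm_num))
  norm_num [Finset.sum_range_succ, Nat.factorial]

lemma Alo_3_2 : (13124100132791/1000000000000 : ℝ) ≤ A 2 (-(5)) := by
  refine le_trans ?_ (A_lower 2 26 (5) (by norm_num))
  norm_num [Finset.sum_range_succ, Nat.factorial]

lemma Ahi_3_2 : A 2 (-(5)) ≤ (6562050071401/500000000000 : ℝ) := by
  refine le_trans (A_upper 2 26 (5) 149 (by norm_num) (expE149 (by norm_num))) ?_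
  norm_num [Finset.sum_range_succ, Nat.factorial]

lemma Alo_3_4 : (2726021467579/250000000000 : ℝ) ≤ A 4 (-(5)) := by
  refine le_trans ?_ (A_lower 4 26 (5) (by norm_num))
  norm_num [Finset.sum_range_succ, Nat.factorial]

lemma Q_w1_pos : 0 < Q (-(54/25)) := by
  have e : Q (-(54/25)) = A 0 (-(54/25)) * A 4 (-(54/25)) - A 0 (-(54/25)) * A 6 (-(54/25))
      - A 2 (-(54/25)) ^ 2 + A 2 (-(54/25)) * A 4 (-(54/25)) := by rw [Q, G]; ring
  have p0 := A_pos 0 (-(54/25)); have p2 := A_pos 2 (-(54/25))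
  have p4 := A_pos 4 (-(54/25)); have p6 := A_pos 6 (-(54/25))
  have t1 : (2577529254793/1000000000000 : ℝ) * (1027653955479/1000000000000 : ℝ) ≤ A 0 (-(54/25)) * A 4 (-(54/25)) :=
    mul_le_mul Alo_1_0 Alo_1_4 (by norm_num) p0.le
  have t2 : A 0 (-(54/25)) * A 6 (-(54/25)) ≤ (2577529654523/1000000000000 : ℝ) * (204448445397/250000000000 : ℝ) :=
    mul_le_mul Ahi_1_0 Ahi_1_6 p6.le (by norm_num)
  have t3 : A 2 (-(54/25)) ^ 2 ≤ (1410557849141/1000000000000 : ℝ) ^ 2 := by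
    apply pow_le_pow_left₀ p2.le Ahi_1_2
  have t4 : (440799211/312500000 : ℝ) * (1027653955479/1000000000000 : ℝ) ≤ A 2 (-(54/25)) * A 4 (-(54/25)) :=
    mul_le_mul Alo_1_2 Alo_1_4 (by norm_num) p2.le
  have hnum : (0:ℝ) < (2577529254793/1000000000000 : ℝ) * (1027653955479/1000000000000 : ℝ) - (2577529654523/1000000000000 : ℝ) * (204448445397/250000000000 : ℝ)
      - (1410557849141/1000000000000 : ℝ) ^ 2 + (440799211/312500000 : ℝ) * (1027653955479/1000000000000 : ℝ) := by norm_num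
  rw [e]; linarith

lemma Q_w2_neg : Q (-(219/100)) < 0 := by
  have e : Q (-(219/100)) = A 0 (-(219/100)) * A 4 (-(219/100)) - A 0 (-(219/100)) * A 6 (-(219/100))
      - A 2 (-(219/100)) ^ 2 + A 2 (-(219/100)) * A 4 (-(219/100)) := by rw [Q, G]; ring
  have p0 := A_pos 0 (-(219/100)); have p2 := A_pos 2 (-(219/100))
  have p4 := A_pos 4 (-(219/100)); have p6 := A_pos 6 (-(219/100))
  have t1 : A 0 (-(219/100)) * A 4 (-(219/100)) ≤ (524062521461/200000000000 : ℝ) * (526248886321/500000000000 : ℝ) :=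
    mul_le_mul Ahi_2_0 Ahi_2_4 p4.le (by norm_num)
  have t2 : (2620312122429/1000000000000 : ℝ) * (419260978019/500000000000 : ℝ) ≤ A 0 (-(219/100)) * A 6 (-(219/100)) :=
    mul_le_mul Alo_2_0 Alo_2_6 (by norm_num) p0.le
  have t3 : (1441758186319/1000000000000 : ℝ) ^ 2 ≤ A 2 (-(219/100)) ^ 2 := by
    apply pow_le_pow_left₀ (by norm_num) Alo_2_2
  have t4 : A 2 (-(219/100)) * A 4 (-(219/100)) ≤ (1441758639913/1000000000000 : ℝ) * (526248886321/500000000000 : ℝ) :=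
    mul_le_mul Ahi_2_2 Ahi_2_4 p4.le (by norm_num)
  have hnum : (524062521461/200000000000 : ℝ) * (526248886321/500000000000 : ℝ) - (2620312122429/1000000000000 : ℝ) * (419260978019/500000000000 : ℝ)
      - (1441758186319/1000000000000 : ℝ) ^ 2 + (1441758639913/1000000000000 : ℝ) * (526248886321/500000000000 : ℝ) < (0:ℝ) := by norm_num
  rw [e]; linarith

lemma H5_bound : 15 * G (-(5:ℝ)) < 2 * A 0 (-(5:ℝ)) := by
  have e : G (-(5:ℝ)) = A 2 (-(5:ℝ)) - A 4 (-(5:ℝ)) := rfl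
  have hnum : 15 * ((6562050071401/500000000000 : ℝ) - (2726021467579/250000000000 : ℝ)) < 2 * (4293039443439/250000000000 : ℝ) := by norm_num
  have h1 := Alo_3_0; have h2 := Ahi_3_2; have h3 := Alo_3_4
  rw [e]; linarith

lemma pointwise_C {z w : ℝ} (hw1 : 54/25 ≤ w) (hw2 : w ≤ 219/100) :
    (3 - 20 * z ^ 2 + 20 * z ^ 4) * Real.exp (54/25 * z ^ 2)
      - 32 * (z ^ 4 - 2 * z ^ 6 + z ^ 8)
        * (Real.exp (219/100 * z ^ 2) - Real.exp (54/25 * z ^ 2))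
      ≤ (3 - 20 * z ^ 2 + 20 * z ^ 4) * Real.exp (w * z ^ 2) := by
  set E1 := Real.exp (54/25 * z ^ 2) with hE1
  set E := Real.exp (w * z ^ 2) with hE
  set E2 := Real.exp (219/100 * z ^ 2) with hE2
  have hE1E : E1 ≤ E := Real.exp_le_exp.2 (mul_le_mul_of_nonneg_right hw1 (sq_nonneg z))
  have hEE2 : E ≤ E2 := Real.exp_le_exp.2 (mul_le_mul_of_nonneg_right hw2 (sq_nonneg z))
  have hMnn : (0:ℝ) ≤ 32 * (z ^ 4 - 2 * z ^ 6 + z ^ 8) := by nlinarith [sq_nonneg (z ^ 2 - z ^ 4)]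
  have hkey : 32 * (z ^ 4 - 2 * z ^ 6 + z ^ 8) + (3 - 20 * z ^ 2 + 20 * z ^ 4)
      = (1/5) * (2 * z ^ 2 - 1) ^ 2 * (40 * z ^ 4 - 40 * z ^ 2 + 15) := by ring
  have h27 : (0:ℝ) ≤ 40 * z ^ 4 - 40 * z ^ 2 + 15 := by nlinarith [sq_nonneg (2 * z ^ 2 - 1)]
  have hM : (0:ℝ) ≤ 32 * (z ^ 4 - 2 * z ^ 6 + z ^ 8) + (3 - 20 * z ^ 2 + 20 * z ^ 4) := by
    rw [hkey]; positivity
  have f1 : (0:ℝ) ≤ (32 * (z ^ 4 - 2 * z ^ 6 + z ^ 8) + (3 - 20 * z ^ 2 + 20 * z ^ 4)) * (E - E1) :=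
    mul_nonneg hM (by linarith)
  have f2 : (0:ℝ) ≤ 32 * (z ^ 4 - 2 * z ^ 6 + z ^ 8) * (E2 - E) :=
    mul_nonneg hMnn (by linarith)
  nlinarith [f1, f2]

open Fin.NatCast in
lemma comb_eq (η : ℝ) :
    3 * A 0 η - 20 * G η
      = ∫ z in (0:ℝ)..1, (3 - 20 * z ^ 2 + 20 * z ^ 4) * Real.exp (-η * z ^ 2) := by
  have e : ∀ z : ℝ, (3 - 20 * z ^ 2 + 20 * z ^ 4) * Real.exp (-η * z ^ 2)
      = (∑ i ∈ Finset.range 3, (![3, -20, 20] i) * z ^ (![0, 2, 4] i)) * Real.exp (-η * z ^ 2) := by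
    intro z
    congr 1
    simp [Finset.sum_range_succ]
    ring
  rw [intervalIntegral.integral_congr (fun z _ => e z), integral_sum_A]
  simp [Finset.sum_range_succ, G]
  ring

open Fin.NatCast in
lemma C_pos {η : ℝ} (hη : η ∈ Set.Icc (-(219/100) : ℝ) (-(54/25))) :
    0 < 3 * A 0 η - 20 * G η := by
  have hw1 : (54/25 : ℝ) ≤ -η := by have := hη.2; linarith
  have hw2 : -η ≤ (219/100 : ℝ) := by have := hη.1; linarith
  -- the lower comparison function
  set L : ℝ → ℝ := fun z =>
    ((∑ i ∈ Finset.range 5, (![3, -20, 52, -64, 32] i) * z ^ (![0, 2, 4, 6, 8] i))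
        * Real.exp (-(-(54/25)) * z ^ 2))
      + (∑ i ∈ Finset.range 3, (![(-32 : ℝ), 64, -32] i) * z ^ (![4, 6, 8] i))
        * Real.exp (-(-(219/100)) * z ^ 2) with hL
  have hLint : (∫ z in (0:ℝ)..1, L z)
      = (3 * A 0 (-(54/25)) - 20 * A 2 (-(54/25)) + 52 * A 4 (-(54/25))
          - 64 * A 6 (-(54/25)) + 32 * A 8 (-(54/25)))
        + (-32 * A 4 (-(219/100)) + 64 * A 6 (-(219/100)) - 32 * A 8 (-(219/100))) := by
    rw [hL, intervalIntegral.integral_add]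
    · rw [integral_sum_A, integral_sum_A]
      simp [Finset.sum_range_succ]
      ring
    · apply Continuous.intervalIntegrable
      apply Continuous.mul _ (by fun_prop)
      apply continuous_finset_sum; intro i _; fun_prop
    · apply Continuous.intervalIntegrable
      apply Continuous.mul _ (by fun_prop)
      apply continuous_finset_sum; intro i _; fun_prop
  have hmono : (∫ z in (0:ℝ)..1, L z)
      ≤ ∫ z in (0:ℝ)..1, (3 - 20 * z ^ 2 + 20 * z ^ 4) * Real.exp (-η * z ^ 2) := by
    apply intervalIntegral.integral_mono_on zero_le_one
    · apply Continuous.intervalIntegrable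
      apply Continuous.add
      · apply Continuous.mul _ (by fun_prop)
        apply continuous_finset_sum; intro i _; fun_prop
      · apply Continuous.mul _ (by fun_prop)
        apply continuous_finset_sum; intro i _; fun_prop
    · apply Continuous.intervalIntegrable; fun_prop
    · intro z _
      have hp := pointwise_C (z := z) hw1 hw2
      have hLz : L z = (3 - 20 * z ^ 2 + 20 * z ^ 4) * Real.exp (54/25 * z ^ 2)
          - 32 * (z ^ 4 - 2 * z ^ 6 + z ^ 8)
            * (Real.exp (219/100 * z ^ 2) - Real.exp (54/25 * z ^ 2)) := by
        rw [hL]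
        simp only [neg_neg]
        simp [Finset.sum_range_succ]
        ring
      rw [hLz]
      have : -η * z ^ 2 = (-η) * z ^ 2 := by ring
      calc (3 - 20 * z ^ 2 + 20 * z ^ 4) * Real.exp (54/25 * z ^ 2)
          - 32 * (z ^ 4 - 2 * z ^ 6 + z ^ 8)
            * (Real.exp (219/100 * z ^ 2) - Real.exp (54/25 * z ^ 2))
          ≤ (3 - 20 * z ^ 2 + 20 * z ^ 4) * Real.exp ((-η) * z ^ 2) := hp
        _ = (3 - 20 * z ^ 2 + 20 * z ^ 4) * Real.exp (-η * z ^ 2) := by norm_num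
  rw [comb_eq η]
  have hnum : (0:ℝ) < (3 * (2577529254793/1000000000000 : ℝ) - 20 * (1410557849141/1000000000000 : ℝ) + 52 * (1027653955479/1000000000000 : ℝ)
      - 64 * (204448445397/250000000000 : ℝ) + 32 * (682079468427/1000000000000 : ℝ))
      + (-32 * (526248886321/500000000000 : ℝ) + 64 * (419260978019/500000000000 : ℝ) - 32 * (349949867577/500000000000 : ℝ)) := by norm_num
  have b1 := Alo_1_0; have b2 := Ahi_1_2; have b3 := Alo_1_4
  have b4 := Ahi_1_6; have b5 := Alo_1_8
  have b6 := Ahi_2_4; have b7 := Alo_2_6; have b8 := Ahi_2_8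
  linarith [hLint, hmono, hnum, b1, b2, b3, b4, b5, b6, b7, b8]

lemma Q_sign_aux {e η : ℝ} (hQe : Q e = 0) :
    (η < e → Q η < 0) ∧ (e < η → 0 < Q η) := by
  have hmono : StrictMono (fun η => Real.exp η * Q η) := by
    apply strictMono_of_deriv_pos
    intro x
    have hd : HasDerivAt (fun η => Real.exp η * Q η)
        (Real.exp x * Q x + Real.exp x *
          (A 2 x * A 4 x - A 0 x * A 6 x + A 0 x * A 8 x - A 4 x ^ 2)) x :=
      (Real.hasDerivAt_exp x).mul (hasDerivAt_Q x)
    rw [hd.deriv]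
    have hCS := CS x
    have heq : Q x + (A 2 x * A 4 x - A 0 x * A 6 x + A 0 x * A 8 x - A 4 x ^ 2)
        = A 0 x * W x - G x ^ 2 := by
      rw [Q, G, W]; ring
    have hpos : 0 < Q x + (A 2 x * A 4 x - A 0 x * A 6 x + A 0 x * A 8 x - A 4 x ^ 2) := by
      rw [heq]; linarith
    nlinarith [Real.exp_pos x]
  constructor
  · intro hlt
    have h := hmono hlt
    simp only [hQe, mul_zero] at h
    by_contra hc
    push_neg at hc
    nlinarith [Real.exp_pos η, mul_nonneg (Real.exp_pos η).le hc]
  · intro hlt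
    have h := hmono hlt
    simp only [hQe, mul_zero] at h
    by_contra hc
    push_neg at hc
    nlinarith [Real.exp_pos η, mul_nonpos_of_nonneg_of_nonpos (Real.exp_pos η).le hc]

noncomputable def hfun (η : ℝ) : ℝ := A 0 η / G η

lemma contG : Continuous G := (contA 2).sub (contA 4)

lemma conthfun : Continuous hfun :=
  (contA 0).div contG (fun η => (G_pos η).ne')

lemma hasDerivAt_hfun (η : ℝ) : HasDerivAt hfun (Q η / G η ^ 2) η := by
  have h0 := hasDerivAt_A 0 η
  have h2 := hasDerivAt_A 2 η
  have h4 := hasDerivAt_A 4 η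
  norm_num at h0 h2 h4
  have hd := h0.div (h2.sub h4) (G_pos η).ne'
  have : (-A 2 η * (A 2 η - A 4 η) - A 0 η * (-A 4 η - -A 6 η)) / (A 2 η - A 4 η) ^ 2
      = Q η / G η ^ 2 := by
    rw [Q, G]; ring_nf
  exact hd_conv hd (by rw [← this]; rfl)

lemma A_at_zero (k : ℕ) : A k 0 = 1 / (k + 1) := by
  rw [A]
  have e : ∀ z : ℝ, z ^ k * Real.exp (-0 * z ^ 2) = z ^ k := by
    intro z; norm_num
  rw [intervalIntegral.integral_congr (fun z _ => e z), integral_pow]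
  norm_num

lemma hfun_zero : hfun 0 = 15 / 2 := by
  rw [hfun, G, A_at_zero, A_at_zero, A_at_zero]
  norm_num

/-- There exists `α* ∈ (20/3, 7.5)` such that for `α* < α < 7.5` the function
`η ↦ B(η, α)` has exactly three zeros (two distinct negative ones and `0`), for
`α = α*` exactly two zeros (one negative and `0`), and for `0 < α < α*` only the
zero `η = 0`. -/
theorem stmt_2 :
    ∃ αs : ℝ, 20 / 3 < αs ∧ αs < 7.5 ∧
      (∀ α : ℝ, αs < α → α < 7.5 →
        ∃ η₁ η₂ : ℝ, η₁ < 0 ∧ η₂ < 0 ∧ η₁ ≠ η₂ ∧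
          {η : ℝ | B η α = 0} = ({η₁, η₂, 0} : Set ℝ)) ∧
      (∃ η₁ : ℝ, η₁ < 0 ∧ {η : ℝ | B η αs = 0} = ({η₁, 0} : Set ℝ)) ∧
      (∀ α : ℝ, 0 < α → α < αs → {η : ℝ | B η α = 0} = ({0} : Set ℝ)) := by
  have h75 : (7.5 : ℝ) = 15 / 2 := by norm_num
  obtain ⟨e, he_mem, hQe⟩ : ∃ e ∈ Set.Icc (-(219/100):ℝ) (-(54/25)), Q e = 0 := by
    have h := intermediate_value_Icc (by norm_num : (-(219/100):ℝ) ≤ -(54/25))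
      contQ.continuousOn
    have h0 : (0:ℝ) ∈ Set.Icc (Q (-(219/100))) (Q (-(54/25))) := ⟨Q_w2_neg.le, Q_w1_pos.le⟩
    obtain ⟨e, hem, hQe⟩ := h h0
    exact ⟨e, hem, hQe⟩
  have he_neg : e < 0 := lt_of_le_of_lt he_mem.2 (by norm_num)
  have hQsign := fun η => Q_sign_aux (e := e) (η := η) hQe
  have hanti : StrictAntiOn hfun (Set.Iic e) := by
    apply strictAntiOn_of_deriv_neg (convex_Iic e) conthfun.continuousOn
    intro x hx
    rw [interior_Iic] at hx
    rw [(hasDerivAt_hfun x).deriv]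
    exact div_neg_of_neg_of_pos ((hQsign x).1 hx) (pow_pos (G_pos x) 2)
  have hmono : StrictMonoOn hfun (Set.Ici e) := by
    apply strictMonoOn_of_deriv_pos (convex_Ici e) conthfun.continuousOn
    intro x hx
    rw [interior_Ici] at hx
    rw [(hasDerivAt_hfun x).deriv]
    exact div_pos ((hQsign x).2 hx) (pow_pos (G_pos x) 2)
  have hmin : ∀ η, hfun e ≤ hfun η := by
    intro η
    rcases lt_trichotomy η e with h | h | h
    · exact (hanti (Set.mem_Iic.2 h.le) (Set.mem_Iic.2 le_rfl) h).le
    · rw [h]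
    · exact (hmono (Set.mem_Ici.2 le_rfl) (Set.mem_Ici.2 h.le) h).le
  have hαs_lt : hfun e < 15 / 2 := by
    have := hmono (Set.mem_Ici.2 le_rfl) (Set.mem_Ici.2 he_neg.le) he_neg
    rwa [hfun_zero] at this
  have hαs_gt : 20 / 3 < hfun e := by
    have hc := C_pos he_mem
    rw [hfun, lt_div_iff₀ (G_pos e)]
    linarith
  have hfun_m5 : 15 / 2 < hfun (-5) := by
    have := H5_bound
    rw [hfun, lt_div_iff₀ (G_pos _)]
    linarith
  have hm5e : (-5:ℝ) < e := lt_of_lt_of_le (by norm_num) he_mem.1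
  have hlevel : ∀ {α : ℝ}, 0 < α → ∀ η : ℝ, (B η α = 0 ↔ η = 0 ∨ hfun η = α) := by
    intro α hα η
    rw [B_zero_iff_s2 hα η]
    apply or_congr_right
    rw [hfun, div_eq_iff (G_pos η).ne']
  have huniq : ∀ {α : ℝ} (η : ℝ), hfun η = α → hfun e = α → η = e := by
    intro α η hη hee
    rcases le_total η e with h | h
    · exact hanti.injOn (Set.mem_Iic.2 h) (Set.mem_Iic.2 le_rfl) (by rw [hη, hee])
    · exact hmono.injOn (Set.mem_Ici.2 h) (Set.mem_Ici.2 le_rfl) (by rw [hη, hee])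
  refine ⟨hfun e, hαs_gt, by rw [h75]; exact hαs_lt, ?_, ?_, ?_⟩
  · -- three zeros
    intro α h1 h2
    rw [h75] at h2
    have hα0 : 0 < α := by linarith
    obtain ⟨η₂, hη₂mem, hη₂⟩ := intermediate_value_Icc he_neg.le conthfun.continuousOn
      (by rw [hfun_zero]; exact ⟨h1.le, by linarith⟩)
    obtain ⟨η₁, hη₁mem, hη₁⟩ := intermediate_value_Icc' hm5e.le conthfun.continuousOn
      ⟨h1.le, by linarith⟩
    have hη₁ne : η₁ ≠ e := by
      intro hc
      rw [hc] at hη₁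
      rw [hη₁] at h1
      exact lt_irrefl α h1
    have hη₁lt : η₁ < e := lt_of_le_of_ne hη₁mem.2 hη₁ne
    have hη₂ne : η₂ ≠ e := by
      intro hc
      rw [hc] at hη₂
      rw [hη₂] at h1
      exact lt_irrefl α h1
    have hη₂gt : e < η₂ := lt_of_le_of_ne hη₂mem.1 (Ne.symm hη₂ne)
    have hη₂ne0 : η₂ ≠ 0 := by
      intro hc
      rw [hc, hfun_zero] at hη₂
      linarith
    have hη₂neg : η₂ < 0 := lt_of_le_of_ne hη₂mem.2 hη₂ne0
    refine ⟨η₁, η₂, by linarith, hη₂neg, by linarith, ?_⟩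
    ext η
    simp only [Set.mem_setOf_eq, Set.mem_insert_iff, Set.mem_singleton_iff]
    rw [hlevel hα0 η]
    constructor
    · rintro (rfl | hh)
      · right; right; rfl
      · rcases le_total η e with h | h
        · left
          exact hanti.injOn (Set.mem_Iic.2 h) (Set.mem_Iic.2 hη₁mem.2) (by rw [hh, hη₁])
        · right; left
          exact hmono.injOn (Set.mem_Ici.2 h) (Set.mem_Ici.2 hη₂mem.1) (by rw [hh, hη₂])
    · rintro (rfl | rfl | rfl)
      · right; exact hη₁
      · right; exact hη₂
      · left; rfl
  · -- two zeros at αs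
    have hα0 : 0 < hfun e := by linarith
    refine ⟨e, he_neg, ?_⟩
    ext η
    simp only [Set.mem_setOf_eq, Set.mem_insert_iff, Set.mem_singleton_iff]
    rw [hlevel hα0 η]
    constructor
    · rintro (rfl | hh)
      · right; rfl
      · left; exact huniq η hh rfl
    · rintro (rfl | rfl)
      · right; rfl
      · left; rfl
  · -- one zero
    intro α hα0 hαlt
    ext η
    simp only [Set.mem_setOf_eq, Set.mem_singleton_iff]
    rw [hlevel hα0 η]
    constructor
    · rintro (rfl | hh)
      · rfl
      · exfalso
        have := hmin η
        linarith [hh ▸ this]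
    · rintro rfl
      left; rfl
end

section
/- For every α > 0, B(η, α) tends to −∞ as η → +∞ and as η → −∞; in particular, for every α > 0 there exists M > 0 such that B(η, α) < 0 whenever |η| ≥ M. -/
open Real MeasureTheory Set Filter

lemma A0_eq_s3 (η : ℝ) : A 0 η = ∫ z in (0:ℝ)..1, Real.exp (-η * z ^ 2) := by
  simp [A]

lemma A0_ge_top (η : ℝ) (hη : 0 ≤ η) : Real.exp (-η) ≤ A 0 η := by
  rw [A0_eq_s3]
  have h : Real.exp (-η) = ∫ _ in (0:ℝ)..1, Real.exp (-η) := by simp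
  rw [h]
  apply intervalIntegral.integral_mono_on (by norm_num)
    (intervalIntegrable_const)
    ((by continuity : Continuous fun z : ℝ => Real.exp (-η * z ^ 2)).intervalIntegrable 0 1)
  intro x hx
  apply Real.exp_le_exp.2
  have hx2 : x ^ 2 ≤ 1 := by nlinarith [hx.1, hx.2]
  nlinarith [mul_nonneg hη (sub_nonneg.2 hx2)]

lemma A0_ge_bot (η : ℝ) (hη : η ≤ -1) : Real.exp (-η) / (-4 * η) ≤ A 0 η := by
  have hη0 : η < 0 := by linarith
  have hpos2 : (0:ℝ) < -2 * η := by linarith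
  have hne : (-2 : ℝ) * η ≠ 0 := ne_of_gt hpos2
  -- first: A 0 η ≥ ∫ exp(-η*(2z-1))
  have hmono : (∫ z in (0:ℝ)..1, Real.exp (-η * (2 * z - 1))) ≤ A 0 η := by
    rw [A0_eq_s3]
    apply intervalIntegral.integral_mono_on (by norm_num)
      ((by continuity : Continuous fun z : ℝ => Real.exp (-η * (2 * z - 1))).intervalIntegrable 0 1)
      ((by continuity : Continuous fun z : ℝ => Real.exp (-η * z ^ 2)).intervalIntegrable 0 1)
    intro x hx
    apply Real.exp_le_exp.2
    nlinarith [sq_nonneg (x - 1)]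
  have hcalc : (∫ z in (0:ℝ)..1, Real.exp (-η * (2 * z - 1)))
      = ((-2 * η)⁻¹) * (Real.exp (-η) - Real.exp η) := by
    have : ∀ z ∈ Set.uIcc (0:ℝ) 1, HasDerivAt (fun z : ℝ => ((-2 * η)⁻¹) * Real.exp (-η * (2 * z - 1)))
        (Real.exp (-η * (2 * z - 1))) z := by
      intro z _
      have h1 : HasDerivAt (fun z : ℝ => -η * (2 * z - 1)) (-2 * η) z := by
        have := (((hasDerivAt_id z).const_mul (2:ℝ)).sub_const 1).const_mul (-η)
        refine this.congr_deriv ?_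
        ring
      have h2 := (h1.exp).const_mul ((-2 * η)⁻¹)
      refine h2.congr_deriv ?_
      rw [mul_comm (Real.exp (-η * (2 * z - 1))) (-2 * η), ← mul_assoc,
        inv_mul_cancel₀ hne, one_mul]
    rw [intervalIntegral.integral_eq_sub_of_hasDerivAt this
      ((by continuity : Continuous fun z : ℝ => Real.exp (-η * (2 * z - 1))).intervalIntegrable 0 1)]
    have e1 : -η * (2 * (1:ℝ) - 1) = -η := by ring
    have e2 : -η * (2 * (0:ℝ) - 1) = η := by ring
    rw [e1, e2]
    ring
  rw [hcalc] at hmono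
  -- exp η ≤ exp(-η)/2 since η ≤ -1
  have h3 : Real.exp η ≤ Real.exp (-η) / 2 := by
    have h4 : Real.exp η ≤ Real.exp (-1) := Real.exp_le_exp.2 hη
    have h5 : Real.exp 1 ≤ Real.exp (-η) := Real.exp_le_exp.2 (by linarith)
    have h6 : Real.exp (-1) * Real.exp 1 = 1 := by
      rw [← Real.exp_add]; norm_num
    have h7 : (2:ℝ) ≤ Real.exp 1 := by
      have := Real.add_one_le_exp (1:ℝ); linarith
    have h8 : Real.exp (-1) ≤ 1/2 := by
      nlinarith [Real.exp_pos (1:ℝ)]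
    nlinarith [Real.exp_pos (1:ℝ)]
  have hexp : 0 < Real.exp (-η) := Real.exp_pos _
  have hd : Real.exp (-η) / (-4 * η) ≤ ((-2 * η)⁻¹) * (Real.exp (-η) - Real.exp η) := by
    rw [div_le_iff₀ (by linarith : (0:ℝ) < -4 * η), inv_mul_eq_div,
      div_mul_eq_mul_div, le_div_iff₀ hpos2]
    nlinarith [mul_nonneg (by linarith : (0:ℝ) ≤ -2 * η)
      (by linarith : (0:ℝ) ≤ Real.exp (-η) - 2 * Real.exp η)]
  linarith

lemma B_le_top (α η : ℝ) (hα : 0 < α) (hη : 0 ≤ η) : B η α ≤ 2 * η - 4 * η ^ 2 / α := by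
  have h1 : 3 * Real.exp (-η) / A 0 η ≤ 3 := by
    rw [div_le_iff₀ (A0_pos η)]
    nlinarith [A0_ge_top η hη]
  unfold B; linarith

lemma B_le_bot (α η : ℝ) (hα : 0 < α) (hη : η ≤ -1) :
    B η α ≤ -10 * η - 3 - 4 * η ^ 2 / α := by
  have h1 : 3 * Real.exp (-η) / A 0 η ≤ -12 * η := by
    rw [div_le_iff₀ (A0_pos η)]
    have h2 := A0_ge_bot η hη
    rw [div_le_iff₀ (by linarith : (0:ℝ) < -4 * η)] at h2
    nlinarith [A0_pos η]
  unfold B; linarith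

/-- For every `α > 0`, `B(η, α) → −∞` as `η → ±∞`; in particular there exists
`M > 0` with `B(η, α) < 0` whenever `|η| ≥ M`. -/
theorem stmt_3 (α : ℝ) (hα : 0 < α) :
    Tendsto (fun η : ℝ => B η α) atTop atBot ∧
    Tendsto (fun η : ℝ => B η α) atBot atBot ∧
    ∃ M : ℝ, 0 < M ∧ ∀ η : ℝ, M ≤ |η| → B η α < 0 := by
  have hT : Tendsto (fun η : ℝ => B η α) atTop atBot := by
    refine tendsto_atBot_mono' atTop (f₁ := fun η : ℝ => -η) ?_ tendsto_neg_atTop_atBot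
    filter_upwards [eventually_ge_atTop (max 1 α)] with η hη
    have hη1 : (1:ℝ) ≤ η := le_trans (le_max_left _ _) hη
    have hηα : α ≤ η := le_trans (le_max_right _ _) hη
    have h1 := B_le_top α η hα (by linarith)
    have h2 : 2 * η - 4 * η ^ 2 / α ≤ -η := by
      rw [sub_le_iff_le_add, ← sub_le_iff_le_add']
      rw [le_div_iff₀ hα]
      nlinarith
    linarith
  have hB : Tendsto (fun η : ℝ => B η α) atBot atBot := by
    refine tendsto_atBot_mono' atBot (f₁ := fun η : ℝ => η) ?_ tendsto_id
    filter_upwards [eventually_le_atBot (min (-1) (-3 * α))] with η hη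
    have hη1 : η ≤ -1 := le_trans hη (min_le_left _ _)
    have hηα : η ≤ -3 * α := le_trans hη (min_le_right _ _)
    have h1 := B_le_bot α η hα hη1
    have h2 : -10 * η - 3 - 4 * η ^ 2 / α ≤ η := by
      have h3 : -12 * η ≤ 4 * η ^ 2 / α := by
        rw [le_div_iff₀ hα]; nlinarith
      linarith
    linarith
  refine ⟨hT, hB, ?_⟩
  obtain ⟨M1, hM1⟩ := (hT.eventually (eventually_lt_atBot 0)).exists_forall_of_atTop
  obtain ⟨M2, hM2⟩ := (hB.eventually (eventually_lt_atBot 0)).exists_forall_of_atBot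
  refine ⟨max 1 (max M1 (-M2)), lt_of_lt_of_le one_pos (le_max_left _ _), ?_⟩
  intro η hη
  rcases le_or_gt 0 η with h | h
  · rw [abs_of_nonneg h] at hη
    exact hM1 η (le_trans (le_trans (le_max_left _ _) (le_max_right _ _)) hη)
  · rw [abs_of_neg h] at hη
    have : -M2 ≤ -η := le_trans (le_trans (le_max_right _ _) (le_max_right _ _)) hη
    exact hM2 η (by linarith)
end

section
/- For every η ∈ ℝ and α > 0, B(η, α) = 0 if and only if η = 0 or α (A_2(η) − A_4(η)) = A_0(η). Equivalently, the equation 3 e^{-η}/A_0(η) = 3 − 2η + 4η²/α is equivalent to 4η² ((A_2(η) − A_4(η))/A_0(η) − 1/α) = 0. -/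
open Real MeasureTheory Set Filter

lemma cont_A (k : ℕ) (η : ℝ) :
    Continuous fun z : ℝ => z ^ k * Real.exp (-η * z ^ 2) := by
  fun_prop

lemma key1 (η : ℝ) : A 0 η - 2 * η * A 2 η = Real.exp (-η) := by
  have hderiv : ∀ x ∈ Set.uIcc (0:ℝ) 1,
      HasDerivAt (fun z : ℝ => z * Real.exp (-η * z ^ 2))
        (x ^ 0 * Real.exp (-η * x ^ 2) - 2 * η * (x ^ 2 * Real.exp (-η * x ^ 2))) x := by
    intro x _
    have h1 : HasDerivAt (fun z : ℝ => -η * z ^ 2) (-η * (2 * x)) x := by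
      simpa using (hasDerivAt_pow 2 x).const_mul (-η)
    have h2 := h1.exp
    have h3 := (hasDerivAt_id x).mul h2
    simp only [id_eq, Pi.mul_def] at h3
    exact h3.congr_deriv (by ring)
  have hint := intervalIntegral.integral_eq_sub_of_hasDerivAt hderiv
    (((cont_A 0 η).sub (continuous_const.mul (cont_A 2 η))).intervalIntegrable 0 1)
  rw [intervalIntegral.integral_sub ((cont_A 0 η).intervalIntegrable 0 1)
      (((cont_A 2 η).intervalIntegrable 0 1).const_mul _),
    intervalIntegral.integral_const_mul] at hint
  simpa [A] using hint

lemma key2 (η : ℝ) : 3 * A 2 η - 2 * η * A 4 η = Real.exp (-η) := by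
  have hderiv : ∀ x ∈ Set.uIcc (0:ℝ) 1,
      HasDerivAt (fun z : ℝ => z ^ 3 * Real.exp (-η * z ^ 2))
        (3 * (x ^ 2 * Real.exp (-η * x ^ 2)) - 2 * η * (x ^ 4 * Real.exp (-η * x ^ 2))) x := by
    intro x _
    have h1 : HasDerivAt (fun z : ℝ => -η * z ^ 2) (-η * (2 * x)) x := by
      simpa using (hasDerivAt_pow 2 x).const_mul (-η)
    have h2 := h1.exp
    have h3 := (hasDerivAt_pow 3 x).mul h2
    simp only [Pi.mul_def] at h3
    exact h3.congr_deriv (by push_cast; ring)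
  have hint := intervalIntegral.integral_eq_sub_of_hasDerivAt hderiv
    (((continuous_const.mul (cont_A 2 η)).sub
      (continuous_const.mul (cont_A 4 η))).intervalIntegrable 0 1)
  rw [intervalIntegral.integral_sub (((cont_A 2 η).intervalIntegrable 0 1).const_mul _)
      (((cont_A 4 η).intervalIntegrable 0 1).const_mul _),
    intervalIntegral.integral_const_mul, intervalIntegral.integral_const_mul] at hint
  simpa [A] using hint

/-- For `η ∈ ℝ` and `α > 0`, `B(η, α) = 0` iff `η = 0` or
`α (A₂(η) − A₄(η)) = A₀(η)`; equivalently, the equation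
`3 e^{-η}/A₀(η) = 3 − 2η + 4η²/α` is equivalent to
`4η²((A₂(η) − A₄(η))/A₀(η) − 1/α) = 0`. -/
theorem stmt_15 (η α : ℝ) (hα : 0 < α) :
    (B η α = 0 ↔ η = 0 ∨ α * (A 2 η - A 4 η) = A 0 η) ∧
    (3 * Real.exp (-η) / A 0 η = 3 - 2 * η + 4 * η ^ 2 / α ↔
      4 * η ^ 2 * ((A 2 η - A 4 η) / A 0 η - 1 / α) = 0) := by
  have h0 := A0_pos η
  have h0' : A 0 η ≠ 0 := ne_of_gt h0
  have hα' : α ≠ 0 := ne_of_gt hα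
  have hkey : 3 * Real.exp (-η) = (3 - 2 * η) * A 0 η + 4 * η ^ 2 * (A 2 η - A 4 η) := by
    linear_combination (2 * η - 3) * key1 η - 2 * η * key2 η
  have hiff : (3 * Real.exp (-η) / A 0 η = 3 - 2 * η + 4 * η ^ 2 / α) ↔
      4 * η ^ 2 * (α * (A 2 η - A 4 η) - A 0 η) = 0 := by
    rw [div_eq_iff h0', hkey,
      show (3 - 2 * η + 4 * η ^ 2 / α) * A 0 η
        = (3 - 2 * η) * A 0 η + (4 * η ^ 2 * A 0 η) / α from by ring,
      add_right_inj, eq_div_iff hα']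
    constructor
    · intro h; linear_combination h
    · intro h; linear_combination h
  have hsplit : (4 * η ^ 2 * (α * (A 2 η - A 4 η) - A 0 η) = 0) ↔
      (η = 0 ∨ α * (A 2 η - A 4 η) = A 0 η) := by
    rw [mul_eq_zero, mul_eq_zero, sub_eq_zero]
    constructor
    · rintro ((h | h) | h)
      · norm_num at h
      · exact Or.inl (pow_eq_zero_iff (two_ne_zero) |>.mp h)
      · exact Or.inr h
    · rintro (h | h)
      · exact Or.inl (Or.inr (by simp [h]))
      · exact Or.inr h
  refine ⟨?_, ?_⟩
  · rw [show B η α = 0 ↔ 3 * Real.exp (-η) / A 0 η = 3 - 2 * η + 4 * η ^ 2 / α from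
      by unfold B; rw [sub_eq_zero], hiff, hsplit]
  · rw [hiff]
    have hd : α * A 0 η ≠ 0 := mul_ne_zero hα' h0'
    have hrw : 4 * η ^ 2 * ((A 2 η - A 4 η) / A 0 η - 1 / α)
        = 4 * η ^ 2 * (α * (A 2 η - A 4 η) - A 0 η) / (α * A 0 η) := by
      field_simp
    rw [hrw, div_eq_zero_iff]
    simp [hd]
end
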